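/- arXiv:math/0112241 — 2 statements merged into one kernel-verified Lean document; each statement's English description precedes it below -/
import Mathlib

section
/- If φ and φ' both avoid Ω₁, then the Lie algebras Der(F_φ) and Der(F_{φ'}) of derivations are isomorphic as complex Lie algebras. -/
open scoped BigOperators

noncomputable section

/-- The underlying space ℂ^{2p} of the Lie algebra `F_φ`. -/
abbrev V (p : ℕ) : Type := Fin (2*p) → ℂ

/-- The space of bilinear maps ℂ^{2p} × ℂ^{2p} → ℂ^{2p}. -/
abbrev Bil (p : ℕ) : Type := V p →ₗ[ℂ] V p →ₗ[ℂ] V p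

/-- The basis vector `X j` (1-indexed, j = 1, …, 2p). -/
def X (p j : ℕ) : V p := fun i => if (i : ℕ) + 1 = j then 1 else 0

/-- The coordinate functional dual to `X j` (1-indexed). -/
def coordL (p j : ℕ) : V p →ₗ[ℂ] ℂ :=
  if h : j - 1 < 2*p then LinearMap.proj (⟨j - 1, h⟩ : Fin (2*p)) else 0

/-- The elementary alternating bilinear map `(x,y) ↦ (x_a y_b − x_b y_a) • v`
(indices 1-based). -/
def elem (p a b : ℕ) (v : V p) : Bil p :=
  (coordL p a).smulRight ((coordL p b).smulRight v)
    - (coordL p b).smulRight ((coordL p a).smulRight v)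

/-- The Lie bracket of the frobeniusian model algebra `F_φ`:
`[X_1,X_2] = −X_1`, `[X_{2k+1},X_{2k+2}] = −X_1`, `[X_2,X_{2k+1}] = −φ_k X_{2k+1}`,
`[X_2,X_{2k+2}] = (1+φ_k) X_{2k+2}` for `1 ≤ k ≤ p−1`. -/
def mu (p : ℕ) (φ : ℕ → ℂ) : Bil p :=
  elem p 1 2 (-(X p 1)) +
    ∑ k ∈ Finset.Icc 1 (p-1),
      (elem p (2*k+1) (2*k+2) (-(X p 1)) + elem p 2 (2*k+1) (-(φ k) • X p (2*k+1))
        + elem p 2 (2*k+2) ((1 + φ k) • X p (2*k+2)))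

/-- `φ` avoids the set `Ω₁`. -/
def AvoidsOmega1 (p : ℕ) (φ : ℕ → ℂ) : Prop :=
  ∀ i j : ℕ, 1 ≤ i → i ≤ p - 1 → 1 ≤ j → j ≤ p - 1 →
    1 + φ i + φ j ≠ 0 ∧ 2 + φ i + φ j ≠ 0 ∧ (i ≠ j → φ i ≠ φ j) ∧
      φ i ≠ 0 ∧ φ i ≠ -1 ∧ 2 * φ i + 1 ≠ 0

/-- `φ` avoids the set `Ω = Ω₁ ∪ Ω₂`. -/
def AvoidsOmega (p : ℕ) (φ : ℕ → ℂ) : Prop :=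
  AvoidsOmega1 p φ ∧
    ∀ i j : ℕ, 1 ≤ i → i ≤ p - 1 → 1 ≤ j → j ≤ p - 1 →
      (i ≠ j → 1 + φ i - φ j ≠ 0) ∧ φ i + φ j ≠ 0 ∧ 2 + φ i ≠ 0 ∧ 1 - φ i ≠ 0 ∧
        1 + 2*φ i - φ j ≠ 0 ∧ 1 + 2*φ i + φ j ≠ 0 ∧ 2*φ i - φ j ≠ 0 ∧ 2 + 2*φ i + φ j ≠ 0

/-- The space of derivations of a bilinear bracket `B` on `ℂ^{2p}`. -/
def derSub (p : ℕ) (B : Bil p) : Submodule ℂ (V p →ₗ[ℂ] V p) where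
  carrier := {D | ∀ x y, D (B x y) = B (D x) y + B x (D y)}
  add_mem' := by
    intro D E hD hE x y
    simp only [LinearMap.add_apply, hD x y, hE x y, map_add, LinearMap.add_apply]
    abel
  zero_mem' := by intro x y; simp
  smul_mem' := by
    intro c D hD x y
    simp only [LinearMap.smul_apply, hD x y, map_smul, LinearMap.map_smul₂,
      LinearMap.smul_apply, smul_add]

/-- The grading subspaces: `g_0 = ℂ X_2`, `g_1 = ⟨X_3,…,X_{2p}⟩`, `g_2 = ℂ X_1`,
and `g_m = 0` otherwise. -/
def gr (p : ℕ) : ℤ → Submodule ℂ (V p) := fun m =>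
  if m = 0 then Submodule.span ℂ {X p 2}
  else if m = 1 then Submodule.span ℂ {v | ∃ j, 3 ≤ j ∧ j ≤ 2*p ∧ v = X p j}
  else if m = 2 then Submodule.span ℂ {X p 1}
  else ⊥

/-- The space of 2-cocycles of `F_φ` with coefficients in the adjoint module
(2-cochains are alternating bilinear maps). -/
def Z2 (p : ℕ) (φ : ℕ → ℂ) : Submodule ℂ (Bil p) where
  carrier := {ψ | (∀ x, ψ x x = 0) ∧
    ∀ x y z, mu p φ x (ψ y z) - mu p φ y (ψ x z) + mu p φ z (ψ x y)
      - ψ (mu p φ x y) z + ψ (mu p φ x z) y - ψ (mu p φ y z) x = 0}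
  add_mem' := by
    rintro ψ₁ ψ₂ ⟨h₁a, h₁c⟩ ⟨h₂a, h₂c⟩
    constructor
    · intro x; simp [h₁a x, h₂a x]
    · intro x y z
      have e₁ := h₁c x y z
      have e₂ := h₂c x y z
      simp only [LinearMap.add_apply, map_add]
      rw [← sub_eq_zero] at *
      simp only [sub_zero] at *
      linear_combination (norm := module) e₁ + e₂
  zero_mem' := by
    constructor
    · intro x; simp
    · intro x y z; simp
  smul_mem' := by
    rintro c ψ ⟨ha, hc⟩
    constructor
    · intro x; simp [ha x]
    · intro x y z
      have e := hc x y z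
      simp only [LinearMap.smul_apply, map_smul]
      linear_combination (norm := module) c • e

/-- The space of 2-coboundaries of `F_φ` with coefficients in the adjoint module. -/
def B2 (p : ℕ) (φ : ℕ → ℂ) : Submodule ℂ (Bil p) where
  carrier := {ψ | ∃ f : V p →ₗ[ℂ] V p,
    ∀ x y, ψ x y = mu p φ x (f y) - mu p φ y (f x) - f (mu p φ x y)}
  add_mem' := by
    rintro ψ₁ ψ₂ ⟨f₁, h₁⟩ ⟨f₂, h₂⟩
    refine ⟨f₁ + f₂, fun x y => ?_⟩
    simp only [LinearMap.add_apply, h₁ x y, h₂ x y, map_add]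
    abel
  zero_mem' := ⟨0, by intro x y; simp⟩
  smul_mem' := by
    rintro c ψ ⟨f, h⟩
    refine ⟨c • f, fun x y => ?_⟩
    simp only [LinearMap.smul_apply, h x y, map_smul, smul_sub]

/-- The 2-cochains of degree `k` with respect to the grading `gr`. -/
def degSub (p : ℕ) (k : ℤ) : Submodule ℂ (Bil p) where
  carrier := {ψ | ∀ (a b : ℤ), ∀ x ∈ gr p a, ∀ y ∈ gr p b, ψ x y ∈ gr p (a + b + k)}
  add_mem' := by
    intro ψ₁ ψ₂ h₁ h₂ a b x hx y hy
    simpa using Submodule.add_mem _ (h₁ a b x hx y hy) (h₂ a b x hx y hy)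
  zero_mem' := by intro a b x hx y hy; simp
  smul_mem' := by
    intro c ψ h a b x hx y hy
    simpa using Submodule.smul_mem _ c (h a b x hx y hy)

attribute [local instance 100] LieRing.ofAssociativeRing

/-- The derivations of `F_φ` as a Lie subalgebra of `End(ℂ^{2p})`. -/
def derLie (p : ℕ) (φ : ℕ → ℂ) : LieSubalgebra ℂ (Module.End ℂ (V p)) :=
  { derSub p (mu p φ) with
    lie_mem' := by
      intro D E hD hE
      have hD' : ∀ x y, D (mu p φ x y) = mu p φ (D x) y + mu p φ x (D y) := hD
      have hE' : ∀ x y, E (mu p φ x y) = mu p φ (E x) y + mu p φ x (E y) := hE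
      intro x y
      simp only [Ring.lie_def, LinearMap.sub_apply, Module.End.mul_apply]
      rw [hE' x y, hD' x y, map_add, map_add, hD' (E x) y, hD' x (E y),
        hE' (D x) y, hE' x (D y)]
      simp only [map_sub, LinearMap.sub_apply]
      abel }

/-- The derivation `f_i` of `F_φ` : `f_i(X_{2i+1}) = X_{2i+1}`, `f_i(X_{2i+2}) = −X_{2i+2}`. -/
def fDer (p i : ℕ) : V p →ₗ[ℂ] V p :=
  (coordL p (2*i+1)).smulRight (X p (2*i+1)) - (coordL p (2*i+2)).smulRight (X p (2*i+2))

/-- The 2-cocycle `ψ_k = ψ^{2k+1}_{2,2k+1}` :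
`(X_2,X_{2k+1}) ↦ X_{2k+1}`, `(X_2,X_{2k+2}) ↦ −X_{2k+2}`. -/
def psiK (p k : ℕ) : Bil p :=
  elem p 2 (2*k+1) (X p (2*k+1)) - elem p 2 (2*k+2) (X p (2*k+2))

/-- The 2-cocycle `ψ^2_{12}` spanning `Z²_{−2}`. -/
def psiM2 (p : ℕ) (φ : ℕ → ℂ) : Bil p :=
  elem p 1 2 (X p 2) +
    ∑ k ∈ Finset.Icc 1 (p-1),
      (elem p (2*k+1) (2*k+2) (X p 2) + elem p 1 (2*k+1) (-(φ k) • X p (2*k+1))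
        + elem p 1 (2*k+2) ((1 + φ k) • X p (2*k+2)))

/-- The 2-cocycle `ψ^1_{2,j}` : `(X_2,X_j) ↦ X_1`. -/
def psiTop (p j : ℕ) : Bil p := elem p 2 j (X p 1)


/-! ### Plain-function versions of the relevant spaces.
We realise spaces of (multi)linear maps as submodules of plain function spaces,
the (bi)linearity being part of the defining conditions. -/

/-- `ψ : ℂ^{2p} × ℂ^{2p} → ℂ^{2p}` is bilinear. -/
def IsBil (p : ℕ) (ψ : V p → V p → V p) : Prop :=
  (∀ x x' y, ψ (x + x') y = ψ x y + ψ x' y) ∧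
  (∀ (c : ℂ) (x y), ψ (c • x) y = c • ψ x y) ∧
  (∀ x y y', ψ x (y + y') = ψ x y + ψ x y') ∧
  (∀ (c : ℂ) (x y), ψ x (c • y) = c • ψ x y)

/-- The space of derivations of a bilinear bracket `B` on `ℂ^{2p}`, realised inside
the space of all maps `ℂ^{2p} → ℂ^{2p}` (linearity is part of the conditions). -/
def derF (p : ℕ) (B : Bil p) : Submodule ℂ (V p → V p) where
  carrier := {D | (∀ x y, D (x + y) = D x + D y) ∧ (∀ (c : ℂ) (x), D (c • x) = c • D x) ∧
    ∀ x y, D (B x y) = B (D x) y + B x (D y)}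
  add_mem' := by
    rintro D E ⟨hDa, hDs, hDd⟩ ⟨hEa, hEs, hEd⟩
    refine ⟨fun x y => ?_, fun c x => ?_, fun x y => ?_⟩
    · simp only [Pi.add_apply, hDa, hEa]; abel
    · simp only [Pi.add_apply, hDs, hEs, smul_add]
    · simp only [Pi.add_apply, hDd x y, hEd x y, map_add, LinearMap.add_apply]; abel
  zero_mem' := by
    refine ⟨fun x y => ?_, fun c x => ?_, fun x y => ?_⟩ <;> simp
  smul_mem' := by
    rintro c D ⟨hDa, hDs, hDd⟩
    refine ⟨fun x y => ?_, fun c' x => ?_, fun x y => ?_⟩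
    · simp only [Pi.smul_apply, hDa, smul_add]
    · simp only [Pi.smul_apply, hDs, smul_comm c c']
    · simp only [Pi.smul_apply, hDd x y, map_smul, LinearMap.smul_apply, smul_add]

/-- The space of inner derivations `ad(v) = B(v,·)` of a bilinear bracket `B`. -/
def innerF (p : ℕ) (B : Bil p) : Submodule ℂ (V p → V p) where
  carrier := {D | ∃ v, D = fun y => B v y}
  add_mem' := by
    rintro D E ⟨v, rfl⟩ ⟨w, rfl⟩
    exact ⟨v + w, by funext y; simp [map_add]⟩
  zero_mem' := ⟨0, by funext y; simp⟩
  smul_mem' := by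
    rintro c D ⟨v, rfl⟩
    exact ⟨c • v, by funext y; simp [map_smul]⟩

/-- The space of 2-cocycles of `F_φ` with coefficients in the adjoint module;
2-cochains are alternating bilinear maps `ℂ^{2p} × ℂ^{2p} → ℂ^{2p}`. -/
def Z2F (p : ℕ) (φ : ℕ → ℂ) : Submodule ℂ (V p → V p → V p) where
  carrier := {ψ | IsBil p ψ ∧ (∀ x, ψ x x = 0) ∧
    ∀ x y z, mu p φ x (ψ y z) - mu p φ y (ψ x z) + mu p φ z (ψ x y)
      - ψ (mu p φ x y) z + ψ (mu p φ x z) y - ψ (mu p φ y z) x = 0}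
  add_mem' := by
    rintro ψ₁ ψ₂ ⟨⟨hb₁, hb₂, hb₃, hb₄⟩, ha, hc⟩ ⟨⟨hb₁', hb₂', hb₃', hb₄'⟩, ha', hc'⟩
    refine ⟨⟨fun x x' y => ?_, fun c x y => ?_, fun x y y' => ?_, fun c x y => ?_⟩,
      fun x => ?_, fun x y z => ?_⟩
    · simp only [Pi.add_apply, hb₁, hb₁']; abel
    · simp only [Pi.add_apply, hb₂, hb₂', smul_add]
    · simp only [Pi.add_apply, hb₃, hb₃']; abel
    · simp only [Pi.add_apply, hb₄, hb₄', smul_add]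
    · simp only [Pi.add_apply, ha x, ha' x]; abel
    · have e := hc x y z
      have e' := hc' x y z
      simp only [Pi.add_apply, map_add]
      linear_combination (norm := module) e + e'
  zero_mem' := by
    refine ⟨⟨fun x x' y => ?_, fun c x y => ?_, fun x y y' => ?_, fun c x y => ?_⟩,
      fun x => ?_, fun x y z => ?_⟩ <;> simp
  smul_mem' := by
    rintro c ψ ⟨⟨hb₁, hb₂, hb₃, hb₄⟩, ha, hc⟩
    refine ⟨⟨fun x x' y => ?_, fun c' x y => ?_, fun x y y' => ?_, fun c' x y => ?_⟩,
      fun x => ?_, fun x y z => ?_⟩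
    · simp only [Pi.smul_apply, hb₁, smul_add]
    · simp only [Pi.smul_apply, hb₂, smul_comm c c']
    · simp only [Pi.smul_apply, hb₃, smul_add]
    · simp only [Pi.smul_apply, hb₄, smul_comm c c']
    · simp only [Pi.smul_apply, ha x, smul_zero]
    · have e := hc x y z
      simp only [Pi.smul_apply, map_smul]
      linear_combination (norm := module) c • e

/-- The space of 2-coboundaries of `F_φ` with coefficients in the adjoint module. -/
def B2F (p : ℕ) (φ : ℕ → ℂ) : Submodule ℂ (V p → V p → V p) where
  carrier := {ψ | ∃ f : V p →ₗ[ℂ] V p,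
    ∀ x y, ψ x y = mu p φ x (f y) - mu p φ y (f x) - f (mu p φ x y)}
  add_mem' := by
    rintro ψ₁ ψ₂ ⟨f₁, h₁⟩ ⟨f₂, h₂⟩
    refine ⟨f₁ + f₂, fun x y => ?_⟩
    simp only [Pi.add_apply, h₁ x y, h₂ x y, map_add, LinearMap.add_apply]
    abel
  zero_mem' := ⟨0, by intro x y; simp⟩
  smul_mem' := by
    rintro c ψ ⟨f, h⟩
    refine ⟨c • f, fun x y => ?_⟩
    simp only [Pi.smul_apply, h x y, map_smul, LinearMap.smul_apply, smul_sub]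

/-- The 2-cochains of degree `k` with respect to the grading `gr`. -/
def degF (p : ℕ) (k : ℤ) : Submodule ℂ (V p → V p → V p) where
  carrier := {ψ | ∀ (a b : ℤ), ∀ x ∈ gr p a, ∀ y ∈ gr p b, ψ x y ∈ gr p (a + b + k)}
  add_mem' := by
    intro ψ₁ ψ₂ h₁ h₂ a b x hx y hy
    simpa using Submodule.add_mem _ (h₁ a b x hx y hy) (h₂ a b x hx y hy)
  zero_mem' := by intro a b x hx y hy; simp
  smul_mem' := by
    intro c ψ h a b x hx y hy
    simpa using Submodule.smul_mem _ c (h a b x hx y hy)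

/-- A bilinear map, viewed as a plain function. -/
def toF (p : ℕ) (B : Bil p) : V p → V p → V p := fun x y => B x y



section Dev
variable {p : ℕ}

-- basic lemmas
lemma X_apply (p j : ℕ) (i : Fin (2*p)) : X p j i = if (i : ℕ) + 1 = j then 1 else 0 := rfl

lemma coordL_apply (p : ℕ) {j : ℕ} (h1 : 1 ≤ j) (h2 : j ≤ 2*p) (x : V p) :
    coordL p j x = x ⟨j-1, by omega⟩ := by
  rw [coordL, dif_pos (by omega : j - 1 < 2*p)]; rfl

lemma coordL_X (p : ℕ) {a : ℕ} (j : ℕ) (h1 : 1 ≤ a) (h2 : a ≤ 2*p) :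
    coordL p a (X p j) = if a = j then 1 else 0 := by
  rw [coordL_apply p h1 h2, X_apply]
  congr 1
  simp only [eq_iff_iff]
  omega

lemma elem_apply (p a b : ℕ) (v : V p) (x y : V p) :
    elem p a b v x y = (coordL p a x * coordL p b y - coordL p b x * coordL p a y) • v := by
  simp [elem, LinearMap.smulRight_apply, LinearMap.sub_apply, sub_smul, mul_smul]

lemma mu_apply (p : ℕ) (φ : ℕ → ℂ) (x y : V p) :
    mu p φ x y =
      (coordL p 1 x * coordL p 2 y - coordL p 2 x * coordL p 1 y) • (-(X p 1)) +
      ∑ k ∈ Finset.Icc 1 (p-1),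
        ((coordL p (2*k+1) x * coordL p (2*k+2) y
            - coordL p (2*k+2) x * coordL p (2*k+1) y) • (-(X p 1))
          + (coordL p 2 x * coordL p (2*k+1) y
            - coordL p (2*k+1) x * coordL p 2 y) • (-(φ k) • X p (2*k+1))
          + (coordL p 2 x * coordL p (2*k+2) y
            - coordL p (2*k+2) x * coordL p 2 y) • ((1 + φ k) • X p (2*k+2))) := by
  simp only [mu, LinearMap.add_apply, LinearMap.sum_apply, elem_apply]

variable {p : ℕ}

lemma coordL_X_ne {a : ℕ} (j : ℕ) (h1 : 1 ≤ a) (h2 : a ≤ 2*p) (h3 : a ≠ j) :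
    coordL p a (X p j) = 0 := by
  rw [coordL_X p j h1 h2, if_neg h3]

lemma coordL_X_self {a : ℕ} (h1 : 1 ≤ a) (h2 : a ≤ 2*p) :
    coordL p a (X p a) = 1 := by
  rw [coordL_X p a h1 h2, if_pos rfl]

lemma mem_Icc_bounds {k : ℕ} (hp : 2 ≤ p) (hk : k ∈ Finset.Icc 1 (p-1)) :
    1 ≤ k ∧ k ≤ p - 1 ∧ 2*k+1 ≤ 2*p ∧ 2*k+2 ≤ 2*p := by
  simp only [Finset.mem_Icc] at hk; omega

lemma mu_right1 (hp : 2 ≤ p) (φ : ℕ → ℂ) (x : V p) :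
    mu p φ x (X p 1) = coordL p 2 x • X p 1 := by
  rw [mu_apply, Finset.sum_eq_zero]
  · simp (disch := omega) only [coordL_X_ne, coordL_X_self]
    module
  · intro k hk
    obtain ⟨h1, h2, h3, h4⟩ := mem_Icc_bounds hp hk
    simp (disch := omega) only [coordL_X_ne, coordL_X_self]
    module

lemma mu_right2 (hp : 2 ≤ p) (φ : ℕ → ℂ) (x : V p) :
    mu p φ x (X p 2) = (-(coordL p 1 x)) • X p 1 +
      ∑ k ∈ Finset.Icc 1 (p-1),
        ((φ k * coordL p (2*k+1) x) • X p (2*k+1)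
          + (-((1 + φ k) * coordL p (2*k+2) x)) • X p (2*k+2)) := by
  rw [mu_apply]
  congr 1
  · simp (disch := omega) only [coordL_X_ne, coordL_X_self]
    module
  refine Finset.sum_congr rfl ?_
  intro k hk
  obtain ⟨h1, h2, h3, h4⟩ := mem_Icc_bounds hp hk
  simp (disch := omega) only [coordL_X_ne, coordL_X_self]
  module

lemma mu_right_odd (hp : 2 ≤ p) (φ : ℕ → ℂ) {k : ℕ} (hk1 : 1 ≤ k) (hk2 : k ≤ p - 1) (x : V p) :
    mu p φ x (X p (2*k+1)) = coordL p (2*k+2) x • X p 1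
      + (-(φ k * coordL p 2 x)) • X p (2*k+1) := by
  rw [mu_apply, Finset.sum_eq_single k]
  · simp (disch := omega) only [coordL_X_ne, coordL_X_self]
    module
  · intro b hb hbk
    obtain ⟨h1, h2, h3, h4⟩ := mem_Icc_bounds hp hb
    simp (disch := omega) only [coordL_X_ne, coordL_X_self]
    module
  · intro h
    exact absurd (Finset.mem_Icc.mpr ⟨hk1, hk2⟩) h

lemma mu_right_even (hp : 2 ≤ p) (φ : ℕ → ℂ) {k : ℕ} (hk1 : 1 ≤ k) (hk2 : k ≤ p - 1) (x : V p) :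
    mu p φ x (X p (2*k+2)) = (-(coordL p (2*k+1) x)) • X p 1
      + ((1 + φ k) * coordL p 2 x) • X p (2*k+2) := by
  rw [mu_apply, Finset.sum_eq_single k]
  · simp (disch := omega) only [coordL_X_ne, coordL_X_self]
    module
  · intro b hb hbk
    obtain ⟨h1, h2, h3, h4⟩ := mem_Icc_bounds hp hb
    simp (disch := omega) only [coordL_X_ne, coordL_X_self]
    module
  · intro h
    exact absurd (Finset.mem_Icc.mpr ⟨hk1, hk2⟩) h

lemma mu_self' (p : ℕ) (φ : ℕ → ℂ) (x : V p) : mu p φ x x = 0 := by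
  rw [mu_apply]
  simp only [mul_comm, sub_self, zero_smul, add_zero, zero_add]
  exact Finset.sum_eq_zero fun k _ => by simp [mul_comm]

lemma mu_anti (p : ℕ) (φ : ℕ → ℂ) (x y : V p) : mu p φ y x = - mu p φ x y := by
  have h := mu_self' p φ (x + y)
  simp only [map_add, LinearMap.add_apply, mu_self' p φ x, mu_self' p φ y] at h
  have : mu p φ x y + mu p φ y x = 0 := by
    rw [← h]; abel
  linear_combination (norm := module) this
lemma X_eq_single (i : Fin (2*p)) : X p ((i:ℕ)+1) = Pi.single i 1 := by
  funext m
  rw [X_apply, Pi.single_apply]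
  by_cases h : m = i
  · subst h; simp
  · rw [if_neg (by simpa [Fin.ext_iff] using h), if_neg h]

lemma expand (hp : 2 ≤ p) (v : V p) :
    v = ∑ j ∈ Finset.Icc 1 (2*p), coordL p j v • X p j := by
  funext m
  rw [Finset.sum_apply]
  rw [Finset.sum_eq_single ((m:ℕ)+1)]
  · rw [Pi.smul_apply, X_apply, if_pos rfl, coordL_apply p (by omega) (by omega)]
    simp [Fin.ext_iff]
  · intro b hb hbm
    rw [Pi.smul_apply, X_apply, if_neg (fun h => hbm h.symm), smul_zero]
  · intro h
    exact absurd (Finset.mem_Icc.mpr ⟨by omega, by omega⟩) h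

lemma sum_split {M : Type*} [AddCommMonoid M] (g : ℕ → M) (q : ℕ) :
    ∑ j ∈ Finset.Icc 3 (2*q+2), g j = ∑ k ∈ Finset.Icc 1 q, (g (2*k+1) + g (2*k+2)) := by
  induction q with
  | zero => simp
  | succ n ih =>
    have h1 : 2*(n+1)+2 = (2*n+3)+1 := by ring
    have h2 : 2*n+3 = (2*n+2)+1 := by ring
    rw [h1, Finset.sum_Icc_succ_top (by omega), h2, Finset.sum_Icc_succ_top (by omega), ih,
      Finset.sum_Icc_succ_top (by omega : 1 ≤ n+1)]
    have e1 : 2*(n+1)+1 = 2*n+2+1 := by ring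
    have e2 : 2*(n+1)+2 = 2*n+3+1 := by ring
    rw [e1, e2, add_assoc]

lemma expand4 (hp : 2 ≤ p) (v : V p) :
    v = coordL p 1 v • X p 1 + coordL p 2 v • X p 2 +
      ∑ k ∈ Finset.Icc 1 (p-1),
        (coordL p (2*k+1) v • X p (2*k+1) + coordL p (2*k+2) v • X p (2*k+2)) := by
  conv_lhs => rw [expand hp v]
  have h1 : Finset.Icc 1 (2*p) = Finset.Icc 1 2 ∪ Finset.Icc 3 (2*p) := by
    ext a
    simp only [Finset.mem_Icc, Finset.mem_union]
    omega
  rw [h1, Finset.sum_union (by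
    rw [Finset.disjoint_left]
    intro a ha hb
    simp only [Finset.mem_Icc] at ha hb
    omega)]
  have h3 := sum_split (fun j => coordL p j v • X p j) (p-1)
  rw [show 2*(p-1)+2 = 2*p from by omega] at h3
  rw [h3]
  congr 1
  rw [show Finset.Icc 1 2 = {1, 2} from rfl]
  simp

lemma basis_cases (hp : 2 ≤ p) (i : Fin (2*p)) :
    Pi.single i (1:ℂ) = X p 1 ∨ Pi.single i (1:ℂ) = X p 2 ∨
      (∃ k, 1 ≤ k ∧ k ≤ p-1 ∧ Pi.single i (1:ℂ) = X p (2*k+1)) ∨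
      (∃ k, 1 ≤ k ∧ k ≤ p-1 ∧ Pi.single i (1:ℂ) = X p (2*k+2)) := by
  have hi : (i:ℕ) < 2*p := i.isLt
  have hx := (X_eq_single i).symm
  rcases Nat.lt_or_ge (i:ℕ) 2 with h | h
  · rcases Nat.lt_or_ge (i:ℕ) 1 with h0 | h0
    · left; rw [hx, show (i:ℕ)+1 = 1 from by omega]
    · right; left; rw [hx, show (i:ℕ)+1 = 2 from by omega]
  · rcases Nat.even_or_odd (i:ℕ) with ⟨k, hk⟩ | ⟨k, hk⟩
    · refine Or.inr (Or.inr (Or.inl ⟨k, by omega, by omega, ?_⟩))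
      rw [hx, show (i:ℕ)+1 = 2*k+1 from by omega]
    · refine Or.inr (Or.inr (Or.inr ⟨k, by omega, by omega, ?_⟩))
      rw [hx, show (i:ℕ)+1 = 2*k+2 from by omega]

-- mu on basis pairs
lemma m12 (hp : 2 ≤ p) (φ : ℕ → ℂ) : mu p φ (X p 1) (X p 2) = -(X p 1) := by
  rw [mu_right2 hp, Finset.sum_eq_zero]
  · simp (disch := omega) only [coordL_X_self]
    module
  · intro k hk
    obtain ⟨h1, h2, h3, h4⟩ := mem_Icc_bounds hp hk
    simp (disch := omega) only [coordL_X_ne]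
    module

lemma m21 (hp : 2 ≤ p) (φ : ℕ → ℂ) : mu p φ (X p 2) (X p 1) = X p 1 := by
  rw [mu_anti, m12 hp, neg_neg]

lemma m1o (hp : 2 ≤ p) (φ : ℕ → ℂ) {k : ℕ} (hk1 : 1 ≤ k) (hk2 : k ≤ p-1) :
    mu p φ (X p 1) (X p (2*k+1)) = 0 := by
  rw [mu_right_odd hp φ hk1 hk2]
  simp (disch := omega) only [coordL_X_ne]
  module

lemma m1e (hp : 2 ≤ p) (φ : ℕ → ℂ) {k : ℕ} (hk1 : 1 ≤ k) (hk2 : k ≤ p-1) :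
    mu p φ (X p 1) (X p (2*k+2)) = 0 := by
  rw [mu_right_even hp φ hk1 hk2]
  simp (disch := omega) only [coordL_X_ne]
  module

lemma m2o (hp : 2 ≤ p) (φ : ℕ → ℂ) {k : ℕ} (hk1 : 1 ≤ k) (hk2 : k ≤ p-1) :
    mu p φ (X p 2) (X p (2*k+1)) = (-(φ k)) • X p (2*k+1) := by
  rw [mu_right_odd hp φ hk1 hk2]
  simp (disch := omega) only [coordL_X_ne, coordL_X_self]
  module

lemma m2e (hp : 2 ≤ p) (φ : ℕ → ℂ) {k : ℕ} (hk1 : 1 ≤ k) (hk2 : k ≤ p-1) :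
    mu p φ (X p 2) (X p (2*k+2)) = (1 + φ k) • X p (2*k+2) := by
  rw [mu_right_even hp φ hk1 hk2]
  simp (disch := omega) only [coordL_X_ne, coordL_X_self]
  module

lemma moo (hp : 2 ≤ p) (φ : ℕ → ℂ) {k j : ℕ} (hk1 : 1 ≤ k) (hk2 : k ≤ p-1)
    (hj1 : 1 ≤ j) (hj2 : j ≤ p-1) :
    mu p φ (X p (2*k+1)) (X p (2*j+1)) = 0 := by
  rw [mu_right_odd hp φ hj1 hj2]
  simp (disch := omega) only [coordL_X_ne]
  module

lemma mee (hp : 2 ≤ p) (φ : ℕ → ℂ) {k j : ℕ} (hk1 : 1 ≤ k) (hk2 : k ≤ p-1)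
    (hj1 : 1 ≤ j) (hj2 : j ≤ p-1) :
    mu p φ (X p (2*k+2)) (X p (2*j+2)) = 0 := by
  rw [mu_right_even hp φ hj1 hj2]
  simp (disch := omega) only [coordL_X_ne]
  module

lemma moe (hp : 2 ≤ p) (φ : ℕ → ℂ) {k j : ℕ} (hk1 : 1 ≤ k) (hk2 : k ≤ p-1)
    (hj1 : 1 ≤ j) (hj2 : j ≤ p-1) :
    mu p φ (X p (2*k+1)) (X p (2*j+2)) = if k = j then -(X p 1) else 0 := by
  rw [mu_right_even hp φ hj1 hj2]
  by_cases h : k = j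
  · subst h
    rw [if_pos rfl]
    simp (disch := omega) only [coordL_X_ne, coordL_X_self]
    module
  · rw [if_neg h]
    simp (disch := omega) only [coordL_X_ne]
    module

lemma meo (hp : 2 ≤ p) (φ : ℕ → ℂ) {k j : ℕ} (hk1 : 1 ≤ k) (hk2 : k ≤ p-1)
    (hj1 : 1 ≤ j) (hj2 : j ≤ p-1) :
    mu p φ (X p (2*k+2)) (X p (2*j+1)) = if k = j then X p 1 else 0 := by
  rw [mu_anti, moe hp φ hj1 hj2 hk1 hk2]
  by_cases h : k = j
  · subst h; simp
  · rw [if_neg (fun hh => h hh.symm), if_neg h, neg_zero]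

lemma mo1 (hp : 2 ≤ p) (φ : ℕ → ℂ) {k : ℕ} (hk1 : 1 ≤ k) (hk2 : k ≤ p-1) :
    mu p φ (X p (2*k+1)) (X p 1) = 0 := by
  rw [mu_anti, m1o hp φ hk1 hk2, neg_zero]

lemma me1 (hp : 2 ≤ p) (φ : ℕ → ℂ) {k : ℕ} (hk1 : 1 ≤ k) (hk2 : k ≤ p-1) :
    mu p φ (X p (2*k+2)) (X p 1) = 0 := by
  rw [mu_anti, m1e hp φ hk1 hk2, neg_zero]

lemma mo2 (hp : 2 ≤ p) (φ : ℕ → ℂ) {k : ℕ} (hk1 : 1 ≤ k) (hk2 : k ≤ p-1) :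
    mu p φ (X p (2*k+1)) (X p 2) = φ k • X p (2*k+1) := by
  rw [mu_anti, m2o hp φ hk1 hk2]; module

lemma me2 (hp : 2 ≤ p) (φ : ℕ → ℂ) {k : ℕ} (hk1 : 1 ≤ k) (hk2 : k ≤ p-1) :
    mu p φ (X p (2*k+2)) (X p 2) = (-(1 + φ k)) • X p (2*k+2) := by
  rw [mu_anti, m2e hp φ hk1 hk2]; module

def HasShape (p : ℕ) (φ : ℕ → ℂ) (D : V p →ₗ[ℂ] V p) (α β : ℂ) (r s t u d e : ℕ → ℂ) : Prop :=
  D (X p 1) = α • X p 1 ∧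
  D (X p 2) = β • X p 1 + ∑ k ∈ Finset.Icc 1 (p-1), (r k • X p (2*k+1) + s k • X p (2*k+2)) ∧
  ∀ k, 1 ≤ k → k ≤ p-1 →
    D (X p (2*k+1)) = t k • X p 1 + d k • X p (2*k+1) ∧
    D (X p (2*k+2)) = u k • X p 1 + e k • X p (2*k+2) ∧
    (1 + φ k) * t k = - s k ∧ φ k * u k = - r k ∧ d k + e k = α

lemma bil_ext {B C : Bil p} (h : ∀ i j : Fin (2*p),
    B (Pi.single i 1) (Pi.single j 1) = C (Pi.single i 1) (Pi.single j 1)) : B = C := by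
  apply Module.Basis.ext (Pi.basisFun ℂ (Fin (2*p)))
  intro i
  apply Module.Basis.ext (Pi.basisFun ℂ (Fin (2*p)))
  intro j
  simpa [Pi.basisFun_apply] using h i j

lemma shape_isDer (hp : 2 ≤ p) (φ : ℕ → ℂ) {D : V p →ₗ[ℂ] V p} {α β : ℂ}
    {r s t u d e : ℕ → ℂ} (hsh : HasShape p φ D α β r s t u d e) :
    ∀ x y, D (mu p φ x y) = mu p φ (D x) y + mu p φ x (D y) := by
  obtain ⟨hD1, hD2, hDk⟩ := hsh
  suffices h : (mu p φ).compr₂ D = ((mu p φ).comp D) + (mu p φ).compl₂ D by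
    intro x y
    have h2 := DFunLike.congr_fun (DFunLike.congr_fun h x) y
    simpa only [LinearMap.compr₂_apply, LinearMap.add_apply, LinearMap.comp_apply,
      LinearMap.compl₂_apply] using h2
  have hanti : ∀ x y : V p, D (mu p φ x y) = mu p φ (D x) y + mu p φ x (D y) →
      D (mu p φ y x) = mu p φ (D y) x + mu p φ y (D x) := by
    intro x y hxy
    rw [mu_anti p φ x y, map_neg, hxy, mu_anti p φ x (D y), mu_anti p φ (D x) y]
    abel
  have c11 : ∀ x : V p, D (mu p φ x x) = mu p φ (D x) x + mu p φ x (D x) := by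
    intro x
    rw [mu_self', map_zero, mu_anti p φ (D x) x]
    abel
  have c12 : D (mu p φ (X p 1) (X p 2)) =
      mu p φ (D (X p 1)) (X p 2) + mu p φ (X p 1) (D (X p 2)) := by
    rw [m12 hp, map_neg, hD1, hD2]
    simp only [map_add, map_smul, map_sum, LinearMap.add_apply, LinearMap.smul_apply,
      LinearMap.sum_apply]
    rw [m12 hp, mu_self']
    rw [Finset.sum_eq_zero (fun l hl => ?_)]
    · simp
    · obtain ⟨hl1, hl2, _, _⟩ := mem_Icc_bounds hp hl
      rw [m1o hp φ hl1 hl2, m1e hp φ hl1 hl2]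
      simp
  have c1o : ∀ k, 1 ≤ k → k ≤ p-1 → D (mu p φ (X p 1) (X p (2*k+1))) =
      mu p φ (D (X p 1)) (X p (2*k+1)) + mu p φ (X p 1) (D (X p (2*k+1))) := by
    intro k hk1 hk2
    rw [m1o hp φ hk1 hk2, map_zero, hD1, (hDk k hk1 hk2).1]
    simp only [map_add, map_smul, LinearMap.smul_apply]
    rw [m1o hp φ hk1 hk2, mu_self']
    simp
  have c1e : ∀ k, 1 ≤ k → k ≤ p-1 → D (mu p φ (X p 1) (X p (2*k+2))) =
      mu p φ (D (X p 1)) (X p (2*k+2)) + mu p φ (X p 1) (D (X p (2*k+2))) := by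
    intro k hk1 hk2
    rw [m1e hp φ hk1 hk2, map_zero, hD1, (hDk k hk1 hk2).2.1]
    simp only [map_add, map_smul, LinearMap.smul_apply]
    rw [m1e hp φ hk1 hk2, mu_self']
    simp
  have c2o : ∀ k, 1 ≤ k → k ≤ p-1 → D (mu p φ (X p 2) (X p (2*k+1))) =
      mu p φ (D (X p 2)) (X p (2*k+1)) + mu p φ (X p 2) (D (X p (2*k+1))) := by
    intro k hk1 hk2
    obtain ⟨ho, he, hrt, hru, hde⟩ := hDk k hk1 hk2
    rw [m2o hp φ hk1 hk2, map_smul, ho, hD2]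
    simp only [map_add, map_smul, map_sum, LinearMap.add_apply, LinearMap.smul_apply,
      LinearMap.sum_apply]
    rw [m1o hp φ hk1 hk2, m21 hp, m2o hp φ hk1 hk2]
    rw [Finset.sum_eq_single k]
    · rw [moo hp φ hk1 hk2 hk1 hk2, meo hp φ hk1 hk2 hk1 hk2, if_pos rfl]
      have hv := congrArg (fun c : ℂ => c • X p 1) hrt
      linear_combination (norm := module) (-1 : ℂ) • hv
    · intro l hl hlk
      obtain ⟨hl1, hl2, _, _⟩ := mem_Icc_bounds hp hl
      rw [moo hp φ hl1 hl2 hk1 hk2, meo hp φ hl1 hl2 hk1 hk2, if_neg hlk]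
      simp
    · intro hcon
      exact absurd (Finset.mem_Icc.mpr ⟨hk1, hk2⟩) hcon
  have c2e : ∀ k, 1 ≤ k → k ≤ p-1 → D (mu p φ (X p 2) (X p (2*k+2))) =
      mu p φ (D (X p 2)) (X p (2*k+2)) + mu p φ (X p 2) (D (X p (2*k+2))) := by
    intro k hk1 hk2
    obtain ⟨ho, he, hrt, hru, hde⟩ := hDk k hk1 hk2
    rw [m2e hp φ hk1 hk2, map_smul, he, hD2]
    simp only [map_add, map_smul, map_sum, LinearMap.add_apply, LinearMap.smul_apply,
      LinearMap.sum_apply]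
    rw [m1e hp φ hk1 hk2, m21 hp, m2e hp φ hk1 hk2]
    rw [Finset.sum_eq_single k]
    · rw [moe hp φ hk1 hk2 hk1 hk2, if_pos rfl, mee hp φ hk1 hk2 hk1 hk2]
      have hv := congrArg (fun c : ℂ => c • X p 1) hru
      linear_combination (norm := module) hv
    · intro l hl hlk
      obtain ⟨hl1, hl2, _, _⟩ := mem_Icc_bounds hp hl
      rw [moe hp φ hl1 hl2 hk1 hk2, if_neg hlk, mee hp φ hl1 hl2 hk1 hk2]
      simp
    · intro hcon
      exact absurd (Finset.mem_Icc.mpr ⟨hk1, hk2⟩) hcon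
  have coo : ∀ k l, 1 ≤ k → k ≤ p-1 → 1 ≤ l → l ≤ p-1 →
      D (mu p φ (X p (2*k+1)) (X p (2*l+1))) =
      mu p φ (D (X p (2*k+1))) (X p (2*l+1)) + mu p φ (X p (2*k+1)) (D (X p (2*l+1))) := by
    intro k l hk1 hk2 hl1 hl2
    rw [moo hp φ hk1 hk2 hl1 hl2, map_zero, (hDk k hk1 hk2).1, (hDk l hl1 hl2).1]
    simp only [map_add, map_smul, LinearMap.add_apply, LinearMap.smul_apply]
    rw [m1o hp φ hl1 hl2, moo hp φ hk1 hk2 hl1 hl2, mo1 hp φ hk1 hk2]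
    simp
  have cee : ∀ k l, 1 ≤ k → k ≤ p-1 → 1 ≤ l → l ≤ p-1 →
      D (mu p φ (X p (2*k+2)) (X p (2*l+2))) =
      mu p φ (D (X p (2*k+2))) (X p (2*l+2)) + mu p φ (X p (2*k+2)) (D (X p (2*l+2))) := by
    intro k l hk1 hk2 hl1 hl2
    rw [mee hp φ hk1 hk2 hl1 hl2, map_zero, (hDk k hk1 hk2).2.1, (hDk l hl1 hl2).2.1]
    simp only [map_add, map_smul, LinearMap.add_apply, LinearMap.smul_apply]
    rw [m1e hp φ hl1 hl2, mee hp φ hk1 hk2 hl1 hl2, me1 hp φ hk1 hk2]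
    simp
  have coe : ∀ k l, 1 ≤ k → k ≤ p-1 → 1 ≤ l → l ≤ p-1 →
      D (mu p φ (X p (2*k+1)) (X p (2*l+2))) =
      mu p φ (D (X p (2*k+1))) (X p (2*l+2)) + mu p φ (X p (2*k+1)) (D (X p (2*l+2))) := by
    intro k l hk1 hk2 hl1 hl2
    obtain ⟨hok, hek, hrtk, hruk, hdek⟩ := hDk k hk1 hk2
    obtain ⟨hol, hel, hrtl, hrul, hdel⟩ := hDk l hl1 hl2
    rw [moe hp φ hk1 hk2 hl1 hl2, hok, hel]
    simp only [map_add, map_smul, LinearMap.add_apply, LinearMap.smul_apply]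
    rw [m1e hp φ hl1 hl2, moe hp φ hk1 hk2 hl1 hl2, mo1 hp φ hk1 hk2]
    by_cases h : k = l
    · subst h
      rw [if_pos rfl, map_neg, hD1]
      have hv := congrArg (fun c : ℂ => c • X p 1) hdek
      linear_combination (norm := module) hv
    · rw [if_neg h, map_zero]
      simp
  apply bil_ext
  intro i j
  simp only [LinearMap.compr₂_apply, LinearMap.add_apply, LinearMap.comp_apply,
    LinearMap.compl₂_apply]
  rcases basis_cases hp i with hi | hi | ⟨k, hk1, hk2, hi⟩ | ⟨k, hk1, hk2, hi⟩ <;>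
    rcases basis_cases hp j with hj | hj | ⟨l, hl1, hl2, hj⟩ | ⟨l, hl1, hl2, hj⟩ <;>
    rw [hi, hj]
  · exact c11 _
  · exact c12
  · exact c1o l hl1 hl2
  · exact c1e l hl1 hl2
  · exact hanti _ _ c12
  · exact c11 _
  · exact c2o l hl1 hl2
  · exact c2e l hl1 hl2
  · exact hanti _ _ (c1o k hk1 hk2)
  · exact hanti _ _ (c2o k hk1 hk2)
  · exact coo k l hk1 hk2 hl1 hl2
  · exact coe k l hk1 hk2 hl1 hl2
  · exact hanti _ _ (c1e k hk1 hk2)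
  · exact hanti _ _ (c2e k hk1 hk2)
  · exact hanti _ _ (coe l k hl1 hl2 hk1 hk2)
  · exact cee k l hk1 hk2 hl1 hl2

lemma coordL_sum_one (hp : 2 ≤ p) (f g : ℕ → ℂ) :
    coordL p 1 (∑ k ∈ Finset.Icc 1 (p-1), (f k • X p (2*k+1) + g k • X p (2*k+2))) = 0 := by
  rw [map_sum, Finset.sum_eq_zero]
  intro k hk
  obtain ⟨h1, h2, h3, h4⟩ := mem_Icc_bounds hp hk
  simp (disch := omega) only [map_add, map_smul, coordL_X_ne]
  simp

lemma coordL_sum_two (hp : 2 ≤ p) (f g : ℕ → ℂ) :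
    coordL p 2 (∑ k ∈ Finset.Icc 1 (p-1), (f k • X p (2*k+1) + g k • X p (2*k+2))) = 0 := by
  rw [map_sum, Finset.sum_eq_zero]
  intro k hk
  obtain ⟨h1, h2, h3, h4⟩ := mem_Icc_bounds hp hk
  simp (disch := omega) only [map_add, map_smul, coordL_X_ne]
  simp

lemma coordL_sum_odd (hp : 2 ≤ p) (f g : ℕ → ℂ) {k : ℕ} (hk1 : 1 ≤ k) (hk2 : k ≤ p-1) :
    coordL p (2*k+1) (∑ l ∈ Finset.Icc 1 (p-1), (f l • X p (2*l+1) + g l • X p (2*l+2))) = f k := by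
  rw [map_sum, Finset.sum_eq_single k]
  · simp (disch := omega) only [map_add, map_smul, coordL_X_ne, coordL_X_self]
    simp
  · intro b hb hbk
    obtain ⟨h1, h2, h3, h4⟩ := mem_Icc_bounds hp hb
    simp (disch := omega) only [map_add, map_smul, coordL_X_ne]
    simp
  · intro h; exact absurd (Finset.mem_Icc.mpr ⟨hk1, hk2⟩) h

lemma coordL_sum_even (hp : 2 ≤ p) (f g : ℕ → ℂ) {k : ℕ} (hk1 : 1 ≤ k) (hk2 : k ≤ p-1) :
    coordL p (2*k+2) (∑ l ∈ Finset.Icc 1 (p-1), (f l • X p (2*l+1) + g l • X p (2*l+2))) = g k := by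
  rw [map_sum, Finset.sum_eq_single k]
  · simp (disch := omega) only [map_add, map_smul, coordL_X_ne, coordL_X_self]
    simp
  · intro b hb hbk
    obtain ⟨h1, h2, h3, h4⟩ := mem_Icc_bounds hp hb
    simp (disch := omega) only [map_add, map_smul, coordL_X_ne]
    simp
  · intro h; exact absurd (Finset.mem_Icc.mpr ⟨hk1, hk2⟩) h

lemma der_hasShape (hp : 2 ≤ p) {φ : ℕ → ℂ} (hΩ : AvoidsOmega1 p φ) {D : V p →ₗ[ℂ] V p}
    (hder : ∀ x y, D (mu p φ x y) = mu p φ (D x) y + mu p φ x (D y)) :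
    HasShape p φ D (coordL p 1 (D (X p 1))) (coordL p 1 (D (X p 2)))
      (fun k => coordL p (2*k+1) (D (X p 2))) (fun k => coordL p (2*k+2) (D (X p 2)))
      (fun k => coordL p 1 (D (X p (2*k+1)))) (fun k => coordL p 1 (D (X p (2*k+2))))
      (fun k => coordL p (2*k+1) (D (X p (2*k+1)))) (fun k => coordL p (2*k+2) (D (X p (2*k+2)))) := by
  have hne0 : ∀ i, 1 ≤ i → i ≤ p-1 → φ i ≠ 0 := fun i h1 h2 => (hΩ i i h1 h2 h1 h2).2.2.2.1
  have hne1 : ∀ i, 1 ≤ i → i ≤ p-1 → 1 + φ i ≠ 0 := by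
    intro i h1 h2 h
    exact (hΩ i i h1 h2 h1 h2).2.2.2.2.1 (by linear_combination h)
  have hsumne : ∀ i j, 1 ≤ i → i ≤ p-1 → 1 ≤ j → j ≤ p-1 → 1 + φ i + φ j ≠ 0 :=
    fun i j h1 h2 h3 h4 => (hΩ i j h1 h2 h3 h4).1
  have hdist : ∀ i j, 1 ≤ i → i ≤ p-1 → 1 ≤ j → j ≤ p-1 → i ≠ j → φ i ≠ φ j :=
    fun i j h1 h2 h3 h4 h5 => (hΩ i j h1 h2 h3 h4).2.2.1 h5
  -- Equation from (X1, X2)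
  have e1 := hder (X p 1) (X p 2)
  rw [m12 hp, map_neg, mu_right2 hp φ (D (X p 1)), mu_anti p φ (D (X p 2)) (X p 1),
    mu_right1 hp φ (D (X p 2))] at e1
  -- coordinate facts from e1
  have f12 : coordL p 2 (D (X p 2)) = 0 := by
    have h := congrArg (coordL p 1) e1
    simp only [map_neg, map_add, map_smul, coordL_sum_one hp,
      coordL_X_self (p := p) (a := 1) (by omega) (by omega), smul_eq_mul] at h
    linear_combination h
  have f21 : coordL p 2 (D (X p 1)) = 0 := by
    have h := congrArg (coordL p 2) e1
    simp only [map_neg, map_add, map_smul, coordL_sum_two hp,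
      coordL_X_ne (p := p) (a := 2) 1 (by omega) (by omega) (by omega), smul_eq_mul] at h
    linear_combination -h
  have fo1 : ∀ j, 1 ≤ j → j ≤ p-1 → coordL p (2*j+1) (D (X p 1)) = 0 := by
    intro j h1 h2
    have h := congrArg (coordL p (2*j+1)) e1
    simp only [map_neg, map_add, map_smul, coordL_sum_odd hp _ _ h1 h2,
      coordL_X_ne (p := p) (a := 2*j+1) 1 (by omega) (by omega) (by omega), smul_eq_mul] at h
    have h' : (1 + φ j) * coordL p (2*j+1) (D (X p 1)) = 0 := by linear_combination -h
    rcases mul_eq_zero.mp h' with hc | hc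
    · exact absurd hc (hne1 j h1 h2)
    · exact hc
  have fe1 : ∀ j, 1 ≤ j → j ≤ p-1 → coordL p (2*j+2) (D (X p 1)) = 0 := by
    intro j h1 h2
    have h := congrArg (coordL p (2*j+2)) e1
    simp only [map_neg, map_add, map_smul, coordL_sum_even hp _ _ h1 h2,
      coordL_X_ne (p := p) (a := 2*j+2) 1 (by omega) (by omega) (by omega), smul_eq_mul] at h
    have h' : φ j * coordL p (2*j+2) (D (X p 1)) = 0 := by linear_combination h
    rcases mul_eq_zero.mp h' with hc | hc
    · exact absurd hc (hne0 j h1 h2)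
    · exact hc
  -- assemble SH1, SH2
  have hS1 : D (X p 1) = coordL p 1 (D (X p 1)) • X p 1 := by
    conv_lhs => rw [expand4 hp (D (X p 1))]
    rw [f21, Finset.sum_eq_zero (fun k hk => ?_)]
    · simp
    · obtain ⟨h1, h2, _, _⟩ := mem_Icc_bounds hp hk
      rw [fo1 k h1 h2, fe1 k h1 h2]
      simp
  have hS2 : D (X p 2) = coordL p 1 (D (X p 2)) • X p 1 +
      ∑ k ∈ Finset.Icc 1 (p-1), (coordL p (2*k+1) (D (X p 2)) • X p (2*k+1)
        + coordL p (2*k+2) (D (X p 2)) • X p (2*k+2)) := by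
    conv_lhs => rw [expand4 hp (D (X p 2))]
    rw [f12]
    simp
  refine ⟨hS1, hS2, ?_⟩
  intro k hk1 hk2
  -- Equation from (X2, X_{2k+1})
  have e2 := hder (X p 2) (X p (2*k+1))
  rw [m2o hp φ hk1 hk2, map_smul, mu_right_odd hp φ hk1 hk2 (D (X p 2)),
    mu_anti p φ (D (X p (2*k+1))) (X p 2), mu_right2 hp φ (D (X p (2*k+1)))] at e2
  have g2 : coordL p 2 (D (X p (2*k+1))) = 0 := by
    have h := congrArg (coordL p 2) e2
    simp only [map_neg, map_add, map_smul, coordL_sum_two hp, smul_eq_mul,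
      coordL_X_ne (p := p) (a := 2) 1 (by omega) (by omega) (by omega),
      coordL_X_ne (p := p) (a := 2) (2*k+1) (by omega) (by omega) (by omega)] at h
    have h' : φ k * coordL p 2 (D (X p (2*k+1))) = 0 := by linear_combination -h
    rcases mul_eq_zero.mp h' with hc | hc
    · exact absurd hc (hne0 k hk1 hk2)
    · exact hc
  have grel : (1 + φ k) * coordL p 1 (D (X p (2*k+1))) = -(coordL p (2*k+2) (D (X p 2))) := by
    have h := congrArg (coordL p 1) e2
    simp only [map_neg, map_add, map_smul, coordL_sum_one hp, smul_eq_mul,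
      coordL_X_self (p := p) (a := 1) (by omega) (by omega),
      coordL_X_ne (p := p) (a := 1) (2*k+1) (by omega) (by omega) (by omega)] at h
    linear_combination -h
  have go : ∀ j, 1 ≤ j → j ≤ p-1 → j ≠ k → coordL p (2*j+1) (D (X p (2*k+1))) = 0 := by
    intro j h1 h2 hjk
    have h := congrArg (coordL p (2*j+1)) e2
    simp only [map_neg, map_add, map_smul, coordL_sum_odd hp _ _ h1 h2, smul_eq_mul,
      coordL_X_ne (p := p) (a := 2*j+1) 1 (by omega) (by omega) (by omega),
      coordL_X_ne (p := p) (a := 2*j+1) (2*k+1) (by omega) (by omega) (by omega)] at h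
    have h' : (φ j - φ k) * coordL p (2*j+1) (D (X p (2*k+1))) = 0 := by linear_combination h
    rcases mul_eq_zero.mp h' with hc | hc
    · exact absurd (by linear_combination hc) (hdist j k h1 h2 hk1 hk2 hjk)
    · exact hc
  have ge : ∀ j, 1 ≤ j → j ≤ p-1 → coordL p (2*j+2) (D (X p (2*k+1))) = 0 := by
    intro j h1 h2
    have h := congrArg (coordL p (2*j+2)) e2
    simp only [map_neg, map_add, map_smul, coordL_sum_even hp _ _ h1 h2, smul_eq_mul,
      coordL_X_ne (p := p) (a := 2*j+2) 1 (by omega) (by omega) (by omega),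
      coordL_X_ne (p := p) (a := 2*j+2) (2*k+1) (by omega) (by omega) (by omega)] at h
    have h' : (1 + φ j + φ k) * coordL p (2*j+2) (D (X p (2*k+1))) = 0 := by linear_combination -h
    rcases mul_eq_zero.mp h' with hc | hc
    · exact absurd hc (hsumne j k h1 h2 hk1 hk2)
    · exact hc
  have hS3 : D (X p (2*k+1)) = coordL p 1 (D (X p (2*k+1))) • X p 1
      + coordL p (2*k+1) (D (X p (2*k+1))) • X p (2*k+1) := by
    conv_lhs => rw [expand4 hp (D (X p (2*k+1)))]
    rw [g2, Finset.sum_eq_single k]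
    · rw [ge k hk1 hk2]
      simp
    · intro b hb hbk
      obtain ⟨h1, h2, _, _⟩ := mem_Icc_bounds hp hb
      rw [go b h1 h2 hbk, ge b h1 h2]
      simp
    · intro hcon
      exact absurd (Finset.mem_Icc.mpr ⟨hk1, hk2⟩) hcon
  -- Equation from (X2, X_{2k+2})
  have e3 := hder (X p 2) (X p (2*k+2))
  rw [m2e hp φ hk1 hk2, map_smul, mu_right_even hp φ hk1 hk2 (D (X p 2)),
    mu_anti p φ (D (X p (2*k+2))) (X p 2), mu_right2 hp φ (D (X p (2*k+2)))] at e3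
  have k2 : coordL p 2 (D (X p (2*k+2))) = 0 := by
    have h := congrArg (coordL p 2) e3
    simp only [map_neg, map_add, map_smul, coordL_sum_two hp, smul_eq_mul,
      coordL_X_ne (p := p) (a := 2) 1 (by omega) (by omega) (by omega),
      coordL_X_ne (p := p) (a := 2) (2*k+2) (by omega) (by omega) (by omega)] at h
    have h' : (1 + φ k) * coordL p 2 (D (X p (2*k+2))) = 0 := by linear_combination h
    rcases mul_eq_zero.mp h' with hc | hc
    · exact absurd hc (hne1 k hk1 hk2)
    · exact hc
  have krel : φ k * coordL p 1 (D (X p (2*k+2))) = -(coordL p (2*k+1) (D (X p 2))) := by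
    have h := congrArg (coordL p 1) e3
    simp only [map_neg, map_add, map_smul, coordL_sum_one hp, smul_eq_mul,
      coordL_X_self (p := p) (a := 1) (by omega) (by omega),
      coordL_X_ne (p := p) (a := 1) (2*k+2) (by omega) (by omega) (by omega)] at h
    linear_combination h
  have ko : ∀ j, 1 ≤ j → j ≤ p-1 → coordL p (2*j+1) (D (X p (2*k+2))) = 0 := by
    intro j h1 h2
    have h := congrArg (coordL p (2*j+1)) e3
    simp only [map_neg, map_add, map_smul, coordL_sum_odd hp _ _ h1 h2, smul_eq_mul,
      coordL_X_ne (p := p) (a := 2*j+1) 1 (by omega) (by omega) (by omega),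
      coordL_X_ne (p := p) (a := 2*j+1) (2*k+2) (by omega) (by omega) (by omega)] at h
    have h' : (1 + φ j + φ k) * coordL p (2*j+1) (D (X p (2*k+2))) = 0 := by linear_combination h
    rcases mul_eq_zero.mp h' with hc | hc
    · exact absurd hc (hsumne j k h1 h2 hk1 hk2)
    · exact hc
  have ke : ∀ j, 1 ≤ j → j ≤ p-1 → j ≠ k → coordL p (2*j+2) (D (X p (2*k+2))) = 0 := by
    intro j h1 h2 hjk
    have h := congrArg (coordL p (2*j+2)) e3
    simp only [map_neg, map_add, map_smul, coordL_sum_even hp _ _ h1 h2, smul_eq_mul,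
      coordL_X_ne (p := p) (a := 2*j+2) 1 (by omega) (by omega) (by omega),
      coordL_X_ne (p := p) (a := 2*j+2) (2*k+2) (by omega) (by omega) (by omega)] at h
    have h' : (φ j - φ k) * coordL p (2*j+2) (D (X p (2*k+2))) = 0 := by linear_combination -h
    rcases mul_eq_zero.mp h' with hc | hc
    · exact absurd (by linear_combination hc) (hdist j k h1 h2 hk1 hk2 hjk)
    · exact hc
  have hS4 : D (X p (2*k+2)) = coordL p 1 (D (X p (2*k+2))) • X p 1
      + coordL p (2*k+2) (D (X p (2*k+2))) • X p (2*k+2) := by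
    conv_lhs => rw [expand4 hp (D (X p (2*k+2)))]
    rw [k2, Finset.sum_eq_single k]
    · rw [ko k hk1 hk2]
      simp
    · intro b hb hbk
      obtain ⟨h1, h2, _, _⟩ := mem_Icc_bounds hp hb
      rw [ko b h1 h2, ke b h1 h2 hbk]
      simp
    · intro hcon
      exact absurd (Finset.mem_Icc.mpr ⟨hk1, hk2⟩) hcon
  -- Equation from (X_{2k+1}, X_{2k+2})
  have e4 := hder (X p (2*k+1)) (X p (2*k+2))
  rw [moe hp φ hk1 hk2 hk1 hk2, if_pos rfl, map_neg,
    mu_right_even hp φ hk1 hk2 (D (X p (2*k+1))),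
    mu_anti p φ (D (X p (2*k+2))) (X p (2*k+1)),
    mu_right_odd hp φ hk1 hk2 (D (X p (2*k+2)))] at e4
  have hde : coordL p (2*k+1) (D (X p (2*k+1))) + coordL p (2*k+2) (D (X p (2*k+2)))
      = coordL p 1 (D (X p 1)) := by
    have h := congrArg (coordL p 1) e4
    rw [hS1] at h
    simp only [map_neg, map_add, map_smul, smul_eq_mul,
      coordL_X_self (p := p) (a := 1) (by omega) (by omega),
      coordL_X_ne (p := p) (a := 1) (2*k+1) (by omega) (by omega) (by omega),
      coordL_X_ne (p := p) (a := 1) (2*k+2) (by omega) (by omega) (by omega)] at h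
    linear_combination h
  exact ⟨hS3, hS4, grel, krel, hde⟩

def conj2 (p j : ℕ) : (V p →ₗ[ℂ] V p) →ₗ[ℂ] (V p →ₗ[ℂ] V p) where
  toFun D := ((coordL p j).smulRight (X p j)) ∘ₗ D ∘ₗ ((coordL p 2).smulRight (X p 2))
  map_add' D E := by ext x; simp; ring
  map_smul' c D := by ext x; simp; ring

def Tmap (p : ℕ) (lam mus : ℕ → ℂ) : (V p →ₗ[ℂ] V p) →ₗ[ℂ] (V p →ₗ[ℂ] V p) :=
  LinearMap.id + ∑ k ∈ Finset.Icc 1 (p-1),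
    ((lam k - 1) • conj2 p (2*k+1) + (mus k - 1) • conj2 p (2*k+2))

lemma conj2_apply (p j : ℕ) (D : V p →ₗ[ℂ] V p) (x : V p) :
    conj2 p j D x = coordL p j (D (coordL p 2 x • X p 2)) • X p j := by
  simp [conj2, LinearMap.smulRight_apply]

lemma conj2_apply_X (hp : 2 ≤ p) (j : ℕ) (D : V p →ₗ[ℂ] V p) {a : ℕ} (h1 : 1 ≤ a)
    (h2 : a ≤ 2*p) (h3 : a ≠ 2) : conj2 p j D (X p a) = 0 := by
  rw [conj2_apply, coordL_X_ne a (by omega) (by omega) (Ne.symm h3)]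
  simp

lemma conj2_apply_X2 (hp : 2 ≤ p) (j : ℕ) (D : V p →ₗ[ℂ] V p) :
    conj2 p j D (X p 2) = coordL p j (D (X p 2)) • X p j := by
  rw [conj2_apply, coordL_X_self (p := p) (a := 2) (by omega) (by omega), one_smul]

lemma Tmap_apply (lam mus : ℕ → ℂ) (D : V p →ₗ[ℂ] V p) (x : V p) :
    Tmap p lam mus D x = D x + ∑ k ∈ Finset.Icc 1 (p-1),
      ((lam k - 1) • conj2 p (2*k+1) D x + (mus k - 1) • conj2 p (2*k+2) D x) := by
  rw [Tmap]
  simp only [LinearMap.add_apply, LinearMap.sum_apply, LinearMap.smul_apply, LinearMap.id_apply,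
    LinearMap.id_coe, id_eq]

lemma Tmap_X (hp : 2 ≤ p) (lam mus : ℕ → ℂ) (D : V p →ₗ[ℂ] V p) {a : ℕ} (h1 : 1 ≤ a)
    (h2 : a ≤ 2*p) (h3 : a ≠ 2) : Tmap p lam mus D (X p a) = D (X p a) := by
  rw [Tmap_apply, Finset.sum_eq_zero (fun k hk => by
    rw [conj2_apply_X hp _ D h1 h2 h3, conj2_apply_X hp _ D h1 h2 h3, smul_zero, smul_zero,
      add_zero]), add_zero]

lemma Tmap_X2 (hp : 2 ≤ p) (lam mus : ℕ → ℂ) (D : V p →ₗ[ℂ] V p) :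
    Tmap p lam mus D (X p 2) = D (X p 2) + ∑ k ∈ Finset.Icc 1 (p-1),
      (((lam k - 1) * coordL p (2*k+1) (D (X p 2))) • X p (2*k+1)
        + ((mus k - 1) * coordL p (2*k+2) (D (X p 2))) • X p (2*k+2)) := by
  rw [Tmap_apply]
  congr 1
  refine Finset.sum_congr rfl (fun k hk => ?_)
  rw [conj2_apply_X2 hp _ D, conj2_apply_X2 hp _ D]
  module

lemma Tmap_inv (hp : 2 ≤ p) (lam mus lam' mus' : ℕ → ℂ)
    (hlam : ∀ k, 1 ≤ k → k ≤ p-1 → lam' k * lam k = 1)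
    (hmus : ∀ k, 1 ≤ k → k ≤ p-1 → mus' k * mus k = 1) (D : V p →ₗ[ℂ] V p) :
    Tmap p lam' mus' (Tmap p lam mus D) = D := by
  apply Module.Basis.ext (Pi.basisFun ℂ (Fin (2*p)))
  intro i
  rw [Pi.basisFun_apply]
  rcases basis_cases hp i with hi | hi | ⟨k, hk1, hk2, hi⟩ | ⟨k, hk1, hk2, hi⟩ <;> rw [hi]
  · rw [Tmap_X hp _ _ _ (by omega) (by omega) (by omega),
      Tmap_X hp _ _ _ (by omega) (by omega) (by omega)]
  · have hco : ∀ k, 1 ≤ k → k ≤ p-1 →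
        coordL p (2*k+1) (Tmap p lam mus D (X p 2)) = lam k * coordL p (2*k+1) (D (X p 2)) := by
      intro k h1 h2
      rw [Tmap_X2 hp, map_add, coordL_sum_odd hp _ _ h1 h2]
      ring
    have hce : ∀ k, 1 ≤ k → k ≤ p-1 →
        coordL p (2*k+2) (Tmap p lam mus D (X p 2)) = mus k * coordL p (2*k+2) (D (X p 2)) := by
      intro k h1 h2
      rw [Tmap_X2 hp, map_add, coordL_sum_even hp _ _ h1 h2]
      ring
    rw [Tmap_X2 hp lam' mus' (Tmap p lam mus D)]
    have hrw : (∑ k ∈ Finset.Icc 1 (p-1),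
        (((lam' k - 1) * coordL p (2*k+1) (Tmap p lam mus D (X p 2))) • X p (2*k+1)
          + ((mus' k - 1) * coordL p (2*k+2) (Tmap p lam mus D (X p 2))) • X p (2*k+2)))
        = ∑ k ∈ Finset.Icc 1 (p-1),
        (((lam' k - 1) * (lam k * coordL p (2*k+1) (D (X p 2)))) • X p (2*k+1)
          + ((mus' k - 1) * (mus k * coordL p (2*k+2) (D (X p 2)))) • X p (2*k+2)) := by
      refine Finset.sum_congr rfl (fun k hk => ?_)
      obtain ⟨h1, h2, _, _⟩ := mem_Icc_bounds hp hk
      rw [hco k h1 h2, hce k h1 h2]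
    rw [hrw, Tmap_X2 hp lam mus D, add_assoc, ← Finset.sum_add_distrib]
    rw [Finset.sum_eq_zero (fun k hk => ?_), add_zero]
    obtain ⟨h1, h2, _, _⟩ := mem_Icc_bounds hp hk
    have e1 : (lam k - 1) + (lam' k - 1) * lam k = 0 := by linear_combination hlam k h1 h2
    have e2 : (mus k - 1) + (mus' k - 1) * mus k = 0 := by linear_combination hmus k h1 h2
    have hv1 := congrArg (fun c : ℂ => (c * coordL p (2*k+1) (D (X p 2))) • X p (2*k+1)) e1
    have hv2 := congrArg (fun c : ℂ => (c * coordL p (2*k+2) (D (X p 2))) • X p (2*k+2)) e2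
    linear_combination (norm := module) hv1 + hv2
  · rw [Tmap_X hp _ _ _ (by omega) (by omega) (by omega),
      Tmap_X hp _ _ _ (by omega) (by omega) (by omega)]
  · rw [Tmap_X hp _ _ _ (by omega) (by omega) (by omega),
      Tmap_X hp _ _ _ (by omega) (by omega) (by omega)]

lemma Tmap_hasShape (hp : 2 ≤ p) {φ φ' : ℕ → ℂ}
    (hne0 : ∀ k, 1 ≤ k → k ≤ p-1 → φ k ≠ 0) (hne1 : ∀ k, 1 ≤ k → k ≤ p-1 → 1 + φ k ≠ 0)
    {D : V p →ₗ[ℂ] V p} {α β : ℂ} {r s t u d e : ℕ → ℂ}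
    (hsh : HasShape p φ D α β r s t u d e) :
    HasShape p φ' (Tmap p (fun k => φ' k / φ k) (fun k => (1 + φ' k)/(1 + φ k)) D) α β
      (fun k => (φ' k / φ k) * r k) (fun k => ((1 + φ' k)/(1 + φ k)) * s k) t u d e := by
  obtain ⟨h1, h2, h3⟩ := hsh
  refine ⟨?_, ?_, ?_⟩
  · rw [Tmap_X hp _ _ _ (by omega) (by omega) (by omega), h1]
  · rw [Tmap_X2 hp, h2]
    have hrw : (∑ k ∈ Finset.Icc 1 (p-1),
        (((φ' k / φ k - 1) * coordL p (2*k+1) (β • X p 1 + ∑ l ∈ Finset.Icc 1 (p-1),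
            (r l • X p (2*l+1) + s l • X p (2*l+2)))) • X p (2*k+1)
          + (((1 + φ' k)/(1 + φ k) - 1) * coordL p (2*k+2) (β • X p 1 + ∑ l ∈ Finset.Icc 1 (p-1),
            (r l • X p (2*l+1) + s l • X p (2*l+2)))) • X p (2*k+2)))
        = ∑ k ∈ Finset.Icc 1 (p-1),
        (((φ' k / φ k - 1) * r k) • X p (2*k+1)
          + (((1 + φ' k)/(1 + φ k) - 1) * s k) • X p (2*k+2)) := by
      refine Finset.sum_congr rfl (fun k hk => ?_)
      obtain ⟨hk1, hk2, _, _⟩ := mem_Icc_bounds hp hk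
      rw [map_add, map_add, map_smul, map_smul, coordL_sum_odd hp _ _ hk1 hk2,
        coordL_sum_even hp _ _ hk1 hk2, coordL_X_ne 1 (by omega) (by omega) (by omega),
        coordL_X_ne 1 (by omega) (by omega) (by omega)]
      simp
    rw [hrw, add_assoc, ← Finset.sum_add_distrib]
    congr 1
    refine Finset.sum_congr rfl (fun k hk => ?_)
    module
  · intro k hk1 hk2
    obtain ⟨ho, he, hrt, hru, hde⟩ := h3 k hk1 hk2
    refine ⟨?_, ?_, ?_, ?_, hde⟩
    · rw [Tmap_X hp _ _ _ (by omega) (by omega) (by omega)]; exact ho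
    · rw [Tmap_X hp _ _ _ (by omega) (by omega) (by omega)]; exact he
    · have hc := hne1 k hk1 hk2
      field_simp
      linear_combination (1 + φ' k) * hrt
    · have hc := hne0 k hk1 hk2
      field_simp
      linear_combination φ' k * hru

lemma coordL_sum3_odd (hp : 2 ≤ p) (c f g : ℕ → ℂ) {k : ℕ} (hk1 : 1 ≤ k) (hk2 : k ≤ p-1) :
    coordL p (2*k+1) (∑ l ∈ Finset.Icc 1 (p-1),
      (c l • X p 1 + f l • X p (2*l+1) + g l • X p (2*l+2))) = f k := by
  rw [map_sum, Finset.sum_eq_single k]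
  · simp (disch := omega) only [map_add, map_smul, coordL_X_ne, coordL_X_self]
    simp
  · intro b hb hbk
    obtain ⟨h1, h2, h3, h4⟩ := mem_Icc_bounds hp hb
    simp (disch := omega) only [map_add, map_smul, coordL_X_ne]
    simp
  · intro h; exact absurd (Finset.mem_Icc.mpr ⟨hk1, hk2⟩) h

lemma coordL_sum3_even (hp : 2 ≤ p) (c f g : ℕ → ℂ) {k : ℕ} (hk1 : 1 ≤ k) (hk2 : k ≤ p-1) :
    coordL p (2*k+2) (∑ l ∈ Finset.Icc 1 (p-1),
      (c l • X p 1 + f l • X p (2*l+1) + g l • X p (2*l+2))) = g k := by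
  rw [map_sum, Finset.sum_eq_single k]
  · simp (disch := omega) only [map_add, map_smul, coordL_X_ne, coordL_X_self]
    simp
  · intro b hb hbk
    obtain ⟨h1, h2, h3, h4⟩ := mem_Icc_bounds hp hb
    simp (disch := omega) only [map_add, map_smul, coordL_X_ne]
    simp
  · intro h; exact absurd (Finset.mem_Icc.mpr ⟨hk1, hk2⟩) h

section Bracket

variable {φ : ℕ → ℂ} {D E : V p →ₗ[ℂ] V p} {α β α' β' : ℂ} {r s t u d e r' s' t' u' d' e' : ℕ → ℂ}

lemma bracket_app_one (hshD : HasShape p φ D α β r s t u d e)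
    (hshE : HasShape p φ E α' β' r' s' t' u' d' e') :
    (D ∘ₗ E - E ∘ₗ D) (X p 1) = 0 := by
  simp only [LinearMap.sub_apply, LinearMap.comp_apply]
  rw [hshE.1, map_smul, hshD.1, map_smul, hshE.1]
  module

lemma bracket_app_odd (hshD : HasShape p φ D α β r s t u d e)
    (hshE : HasShape p φ E α' β' r' s' t' u' d' e') {k : ℕ} (hk1 : 1 ≤ k) (hk2 : k ≤ p-1) :
    (D ∘ₗ E - E ∘ₗ D) (X p (2*k+1)) =
      (α * t' k + d' k * t k - α' * t k - d k * t' k) • X p 1 := by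
  simp only [LinearMap.sub_apply, LinearMap.comp_apply]
  rw [(hshE.2.2 k hk1 hk2).1, map_add, map_smul, map_smul, hshD.1, (hshD.2.2 k hk1 hk2).1]
  rw [map_add, map_smul, map_smul, hshE.1, (hshE.2.2 k hk1 hk2).1]
  module

lemma bracket_app_even (hshD : HasShape p φ D α β r s t u d e)
    (hshE : HasShape p φ E α' β' r' s' t' u' d' e') {k : ℕ} (hk1 : 1 ≤ k) (hk2 : k ≤ p-1) :
    (D ∘ₗ E - E ∘ₗ D) (X p (2*k+2)) =
      (α * u' k + e' k * u k - α' * u k - e k * u' k) • X p 1 := by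
  simp only [LinearMap.sub_apply, LinearMap.comp_apply]
  rw [(hshE.2.2 k hk1 hk2).2.1, map_add, map_smul, map_smul, hshD.1, (hshD.2.2 k hk1 hk2).2.1]
  rw [map_add, map_smul, map_smul, hshE.1, (hshE.2.2 k hk1 hk2).2.1]
  module

lemma bracket_app_two (hp : 2 ≤ p) (hshD : HasShape p φ D α β r s t u d e)
    (hshE : HasShape p φ E α' β' r' s' t' u' d' e') :
    (D ∘ₗ E - E ∘ₗ D) (X p 2) = (α * β' - α' * β) • X p 1 +
      ∑ l ∈ Finset.Icc 1 (p-1),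
        ((u' l * t l - u l * t' l) • X p 1 + (r' l * d l - r l * d' l) • X p (2*l+1)
          + (s' l * e l - s l * e' l) • X p (2*l+2)) := by
  simp only [LinearMap.sub_apply, LinearMap.comp_apply]
  rw [hshE.2.1, hshD.2.1]
  simp only [map_add, map_smul, map_sum]
  rw [hshD.1, hshE.1]
  have hA : ∑ l ∈ Finset.Icc 1 (p-1), (r' l • D (X p (2*l+1)) + s' l • D (X p (2*l+2)))
      = ∑ l ∈ Finset.Icc 1 (p-1), (r' l • (t l • X p 1 + d l • X p (2*l+1))
        + s' l • (u l • X p 1 + e l • X p (2*l+2))) := by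
    refine Finset.sum_congr rfl (fun l hl => ?_)
    obtain ⟨h1, h2, _, _⟩ := mem_Icc_bounds hp hl
    rw [(hshD.2.2 l h1 h2).1, (hshD.2.2 l h1 h2).2.1]
  have hB : ∑ l ∈ Finset.Icc 1 (p-1), (r l • E (X p (2*l+1)) + s l • E (X p (2*l+2)))
      = ∑ l ∈ Finset.Icc 1 (p-1), (r l • (t' l • X p 1 + d' l • X p (2*l+1))
        + s l • (u' l • X p 1 + e' l • X p (2*l+2))) := by
    refine Finset.sum_congr rfl (fun l hl => ?_)
    obtain ⟨h1, h2, _, _⟩ := mem_Icc_bounds hp hl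
    rw [(hshE.2.2 l h1 h2).1, (hshE.2.2 l h1 h2).2.1]
  rw [hA, hB]
  have hsum : (∑ l ∈ Finset.Icc 1 (p-1), (r' l • (t l • X p 1 + d l • X p (2*l+1))
        + s' l • (u l • X p 1 + e l • X p (2*l+2))))
      - (∑ l ∈ Finset.Icc 1 (p-1), (r l • (t' l • X p 1 + d' l • X p (2*l+1))
        + s l • (u' l • X p 1 + e' l • X p (2*l+2))))
      = ∑ l ∈ Finset.Icc 1 (p-1),
        ((u' l * t l - u l * t' l) • X p 1 + (r' l * d l - r l * d' l) • X p (2*l+1)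
          + (s' l * e l - s l * e' l) • X p (2*l+2)) := by
    rw [← Finset.sum_sub_distrib]
    refine Finset.sum_congr rfl (fun l hl => ?_)
    obtain ⟨h1, h2, _, _⟩ := mem_Icc_bounds hp hl
    obtain ⟨_, _, hrtD, hruD, _⟩ := hshD.2.2 l h1 h2
    obtain ⟨_, _, hrtE, hruE, _⟩ := hshE.2.2 l h1 h2
    have hz : r' l * t l + s' l * u l - r l * t' l - s l * u' l = u' l * t l - u l * t' l := by
      linear_combination t l * hruE + u l * hrtE - t' l * hruD - u' l * hrtD
    have hv := congrArg (fun c : ℂ => c • X p 1) hz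
    linear_combination (norm := module) hv
  linear_combination (norm := module) hsum

lemma Tmap_bracket (hp : 2 ≤ p) {φ' lam mus : ℕ → ℂ}
    (hshD : HasShape p φ D α β r s t u d e)
    (hshE : HasShape p φ E α' β' r' s' t' u' d' e')
    (hshTD : HasShape p φ' (Tmap p lam mus D) α β
      (fun k => lam k * r k) (fun k => mus k * s k) t u d e)
    (hshTE : HasShape p φ' (Tmap p lam mus E) α' β'
      (fun k => lam k * r' k) (fun k => mus k * s' k) t' u' d' e') :
    Tmap p lam mus (D ∘ₗ E - E ∘ₗ D) =
      (Tmap p lam mus D) ∘ₗ (Tmap p lam mus E) - (Tmap p lam mus E) ∘ₗ (Tmap p lam mus D) := by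
  apply Module.Basis.ext (Pi.basisFun ℂ (Fin (2*p)))
  intro i
  rw [Pi.basisFun_apply]
  rcases basis_cases hp i with hi | hi | ⟨k, hk1, hk2, hi⟩ | ⟨k, hk1, hk2, hi⟩ <;> rw [hi]
  · rw [Tmap_X hp _ _ _ (by omega) (by omega) (by omega), bracket_app_one hshD hshE,
      bracket_app_one hshTD hshTE]
  · rw [Tmap_X2 hp, bracket_app_two hp hshD hshE, bracket_app_two hp hshTD hshTE]
    have hco : ∀ k, 1 ≤ k → k ≤ p-1 →
        coordL p (2*k+1) ((α * β' - α' * β) • X p 1 + ∑ l ∈ Finset.Icc 1 (p-1),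
          ((u' l * t l - u l * t' l) • X p 1 + (r' l * d l - r l * d' l) • X p (2*l+1)
            + (s' l * e l - s l * e' l) • X p (2*l+2)))
        = r' k * d k - r k * d' k := by
      intro k h1 h2
      rw [map_add, map_smul, coordL_X_ne 1 (by omega) (by omega) (by omega),
        coordL_sum3_odd hp _ _ _ h1 h2]
      simp
    have hce : ∀ k, 1 ≤ k → k ≤ p-1 →
        coordL p (2*k+2) ((α * β' - α' * β) • X p 1 + ∑ l ∈ Finset.Icc 1 (p-1),
          ((u' l * t l - u l * t' l) • X p 1 + (r' l * d l - r l * d' l) • X p (2*l+1)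
            + (s' l * e l - s l * e' l) • X p (2*l+2)))
        = s' k * e k - s k * e' k := by
      intro k h1 h2
      rw [map_add, map_smul, coordL_X_ne 1 (by omega) (by omega) (by omega),
        coordL_sum3_even hp _ _ _ h1 h2]
      simp
    have hrw : (∑ k ∈ Finset.Icc 1 (p-1),
        (((lam k - 1) * coordL p (2*k+1) ((α * β' - α' * β) • X p 1 + ∑ l ∈ Finset.Icc 1 (p-1),
          ((u' l * t l - u l * t' l) • X p 1 + (r' l * d l - r l * d' l) • X p (2*l+1)
            + (s' l * e l - s l * e' l) • X p (2*l+2)))) • X p (2*k+1)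
          + ((mus k - 1) * coordL p (2*k+2) ((α * β' - α' * β) • X p 1 + ∑ l ∈ Finset.Icc 1 (p-1),
          ((u' l * t l - u l * t' l) • X p 1 + (r' l * d l - r l * d' l) • X p (2*l+1)
            + (s' l * e l - s l * e' l) • X p (2*l+2)))) • X p (2*k+2)))
        = ∑ k ∈ Finset.Icc 1 (p-1),
        (((lam k - 1) * (r' k * d k - r k * d' k)) • X p (2*k+1)
          + ((mus k - 1) * (s' k * e k - s k * e' k)) • X p (2*k+2)) := by
      refine Finset.sum_congr rfl (fun k hk => ?_)
      obtain ⟨h1, h2, _, _⟩ := mem_Icc_bounds hp hk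
      rw [hco k h1 h2, hce k h1 h2]
    rw [hrw, add_assoc, ← Finset.sum_add_distrib]
    congr 1
    refine Finset.sum_congr rfl (fun k hk => ?_)
    module
  · rw [Tmap_X hp _ _ _ (by omega) (by omega) (by omega),
      bracket_app_odd hshD hshE hk1 hk2, bracket_app_odd hshTD hshTE hk1 hk2]
  · rw [Tmap_X hp _ _ _ (by omega) (by omega) (by omega),
      bracket_app_even hshD hshE hk1 hk2, bracket_app_even hshTD hshTE hk1 hk2]

end Bracket

end Dev

set_option synthInstance.maxHeartbeats 1000000 in
set_option maxHeartbeats 1000000 in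
/-- if `φ` and `φ'` both avoid `Ω₁`, then `Der(F_φ) ≅ Der(F_{φ'})`
as complex Lie algebras. -/
theorem stmt9 (p : ℕ) (hp : 2 ≤ p) (φ φ' : ℕ → ℂ)
    (hΩ : AvoidsOmega1 p φ) (hΩ' : AvoidsOmega1 p φ') :
    Nonempty (↥(derLie p φ) ≃ₗ⁅ℂ⁆ ↥(derLie p φ')) := by
  classical
  have hne0 : ∀ k, 1 ≤ k → k ≤ p-1 → φ k ≠ 0 := fun i h1 h2 => (hΩ i i h1 h2 h1 h2).2.2.2.1
  have hne1 : ∀ k, 1 ≤ k → k ≤ p-1 → 1 + φ k ≠ 0 := by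
    intro i h1 h2 h
    exact (hΩ i i h1 h2 h1 h2).2.2.2.2.1 (by linear_combination h)
  have hne0' : ∀ k, 1 ≤ k → k ≤ p-1 → φ' k ≠ 0 := fun i h1 h2 => (hΩ' i i h1 h2 h1 h2).2.2.2.1
  have hne1' : ∀ k, 1 ≤ k → k ≤ p-1 → 1 + φ' k ≠ 0 := by
    intro i h1 h2 h
    exact (hΩ' i i h1 h2 h1 h2).2.2.2.2.1 (by linear_combination h)
  set lam : ℕ → ℂ := fun k => φ' k / φ k with hlam_def
  set mus : ℕ → ℂ := fun k => (1 + φ' k) / (1 + φ k) with hmus_def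
  set lam' : ℕ → ℂ := fun k => φ k / φ' k with hlam'_def
  set mus' : ℕ → ℂ := fun k => (1 + φ k) / (1 + φ' k) with hmus'_def
  have hprop : ∀ (D : V p →ₗ[ℂ] V p), D ∈ derLie p φ →
      ∀ x y, D (mu p φ x y) = mu p φ (D x) y + mu p φ x (D y) := fun D h => h
  have hprop' : ∀ (D : V p →ₗ[ℂ] V p), D ∈ derLie p φ' →
      ∀ x y, D (mu p φ' x y) = mu p φ' (D x) y + mu p φ' x (D y) := fun D h => h
  have hmemTo : ∀ (D : V p →ₗ[ℂ] V p), D ∈ derLie p φ → Tmap p lam mus D ∈ derLie p φ' :=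
    fun D hD => shape_isDer hp φ' (Tmap_hasShape hp hne0 hne1 (der_hasShape hp hΩ (hprop D hD)))
  have hmemFrom : ∀ (D : V p →ₗ[ℂ] V p), D ∈ derLie p φ' → Tmap p lam' mus' D ∈ derLie p φ :=
    fun D hD => shape_isDer hp φ (Tmap_hasShape hp hne0' hne1' (der_hasShape hp hΩ' (hprop' D hD)))
  have hlam : ∀ k, 1 ≤ k → k ≤ p-1 → lam' k * lam k = 1 := by
    intro k h1 h2
    have a := hne0 k h1 h2
    have b := hne0' k h1 h2
    rw [hlam_def, hlam'_def]
    field_simp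
  have hmus : ∀ k, 1 ≤ k → k ≤ p-1 → mus' k * mus k = 1 := by
    intro k h1 h2
    have a := hne1 k h1 h2
    have b := hne1' k h1 h2
    rw [hmus_def, hmus'_def]
    field_simp
  have hlam2 : ∀ k, 1 ≤ k → k ≤ p-1 → lam k * lam' k = 1 := by
    intro k h1 h2
    rw [mul_comm]
    exact hlam k h1 h2
  have hmus2 : ∀ k, 1 ≤ k → k ≤ p-1 → mus k * mus' k = 1 := by
    intro k h1 h2
    rw [mul_comm]
    exact hmus k h1 h2
  refine ⟨{
    toFun := fun D => ⟨Tmap p lam mus D.1, hmemTo D.1 D.2⟩,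
    map_add' := fun D E => Subtype.ext (by simp),
    map_smul' := fun c D => Subtype.ext (map_smul (Tmap p lam mus) c D.1),
    map_lie' := fun {D E} => Subtype.ext ?_,
    invFun := fun D => ⟨Tmap p lam' mus' D.1, hmemFrom D.1 D.2⟩,
    left_inv := fun D => Subtype.ext (Tmap_inv hp lam mus lam' mus' hlam hmus D.1),
    right_inv := fun D => Subtype.ext (Tmap_inv hp lam' mus' lam mus hlam2 hmus2 D.1) }⟩
  have hshD := der_hasShape hp hΩ (hprop D.1 D.2)
  have hshE := der_hasShape hp hΩ (hprop E.1 E.2)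
  have hshTD := Tmap_hasShape (φ' := φ') hp hne0 hne1 hshD
  have hshTE := Tmap_hasShape (φ' := φ') hp hne0 hne1 hshE
  show Tmap p lam mus (⁅D, E⁆ : ↥(derLie p φ)).1 = ⁅Tmap p lam mus D.1, Tmap p lam mus E.1⁆
  have hbr : (⁅D, E⁆ : ↥(derLie p φ)).1 = D.1 ∘ₗ E.1 - E.1 ∘ₗ D.1 := by
    rw [LieSubalgebra.coe_bracket, Ring.lie_def]
    rfl
  rw [hbr, Ring.lie_def, Tmap_bracket hp hshD hshE hshTD hshTE]
  rfl
end
end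

section
/- If φ avoids Ω, then for every integer k with k ≤ −3 or k ≥ 2, every 2-cocycle on F_φ of degree k is zero: Z²_k = 0. -/
open scoped BigOperators

noncomputable section

attribute [local instance 100] LieRing.ofAssociativeRing

namespace Stmt10Aux

lemma coordL_X (p i j : ℕ) (hj1 : 1 ≤ j) (hj2 : j ≤ 2*p) :
    coordL p j (X p i) = if j = i then 1 else 0 := by
  have h : j - 1 < 2*p := by omega
  have h1 : j - 1 + 1 = j := by omega
  simp only [coordL, dif_pos h, LinearMap.proj_apply, X, h1]

lemma coordL_X_eq (p j : ℕ) (hj1 : 1 ≤ j) (hj2 : j ≤ 2*p) :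
    coordL p j (X p j) = 1 := by rw [coordL_X p j j hj1 hj2, if_pos rfl]

lemma coordL_X_ne (p i j : ℕ) (hj1 : 1 ≤ j) (hj2 : j ≤ 2*p) (h : j ≠ i) :
    coordL p j (X p i) = 0 := by rw [coordL_X p i j hj1 hj2, if_neg h]

lemma elem_apply (p a b : ℕ) (v : V p) (x y : V p) :
    elem p a b v x y
      = (coordL p a x * coordL p b y - coordL p b x * coordL p a y) • v := by
  simp [elem, smul_smul, sub_smul]

lemma mu_self (p : ℕ) (φ : ℕ → ℂ) (x : V p) : mu p φ x x = 0 := by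
  simp [mu, elem_apply, mul_comm]

lemma mu_X2_X1 (p : ℕ) (hp : 1 ≤ p) (φ : ℕ → ℂ) :
    mu p φ (X p 2) (X p 1) = X p 1 := by
  simp only [mu, LinearMap.add_apply, LinearMap.sum_apply, elem_apply]
  rw [Finset.sum_eq_zero, coordL_X_ne p 2 1 (by omega) (by omega) (by omega),
    coordL_X_eq p 1 (by omega) (by omega), coordL_X_eq p 2 (by omega) (by omega),
    coordL_X_ne p 1 2 (by omega) (by omega) (by omega)]
  · simp
  · intro m hm
    simp only [Finset.mem_Icc] at hm
    rw [coordL_X_ne p 2 (2*m+1) (by omega) (by omega) (by omega),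
      coordL_X_ne p 2 (2*m+2) (by omega) (by omega) (by omega),
      coordL_X_ne p 1 (2*m+1) (by omega) (by omega) (by omega),
      coordL_X_ne p 1 (2*m+2) (by omega) (by omega) (by omega),
      coordL_X_eq p 2 (by omega) (by omega),
      coordL_X_ne p 1 2 (by omega) (by omega) (by omega)]
    simp

lemma mu_X1_Xj (p : ℕ) (hp : 1 ≤ p) (φ : ℕ → ℂ) (j : ℕ) (hj : 3 ≤ j) :
    mu p φ (X p 1) (X p j) = 0 := by
  simp only [mu, LinearMap.add_apply, LinearMap.sum_apply, elem_apply]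
  rw [Finset.sum_eq_zero, coordL_X_ne p 1 2 (by omega) (by omega) (by omega),
    coordL_X_ne p j 2 (by omega) (by omega) (by omega)]
  · simp
  · intro m hm
    simp only [Finset.mem_Icc] at hm
    rw [coordL_X_ne p 1 (2*m+1) (by omega) (by omega) (by omega),
      coordL_X_ne p 1 (2*m+2) (by omega) (by omega) (by omega),
      coordL_X_ne p 1 2 (by omega) (by omega) (by omega)]
    simp

lemma mu_X2_Xodd (p : ℕ) (φ : ℕ → ℂ) (k : ℕ) (hk1 : 1 ≤ k) (hk2 : k ≤ p - 1)
    (hp : 1 ≤ p) :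
    mu p φ (X p 2) (X p (2*k+1)) = -(φ k) • X p (2*k+1) := by
  simp only [mu, LinearMap.add_apply, LinearMap.sum_apply, elem_apply]
  rw [Finset.sum_eq_single_of_mem k (by simp only [Finset.mem_Icc]; omega),
    coordL_X_ne p 2 1 (by omega) (by omega) (by omega),
    coordL_X_ne p (2*k+1) 1 (by omega) (by omega) (by omega),
    coordL_X_ne p (2*k+1) 2 (by omega) (by omega) (by omega),
    coordL_X_eq p 2 (by omega) (by omega),
    coordL_X_ne p 2 (2*k+1) (by omega) (by omega) (by omega),
    coordL_X_ne p 2 (2*k+2) (by omega) (by omega) (by omega),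
    coordL_X_eq p (2*k+1) (by omega) (by omega),
    coordL_X_ne p (2*k+1) (2*k+2) (by omega) (by omega) (by omega)]
  · simp
  · intro m hm hmk
    simp only [Finset.mem_Icc] at hm
    rw [coordL_X_ne p 2 (2*m+1) (by omega) (by omega) (by omega),
      coordL_X_ne p 2 (2*m+2) (by omega) (by omega) (by omega),
      coordL_X_eq p 2 (by omega) (by omega),
      coordL_X_ne p (2*k+1) (2*m+1) (by omega) (by omega) (by omega),
      coordL_X_ne p (2*k+1) (2*m+2) (by omega) (by omega) (by omega),
      coordL_X_ne p (2*k+1) 2 (by omega) (by omega) (by omega)]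
    simp

lemma mu_X2_Xeven (p : ℕ) (φ : ℕ → ℂ) (k : ℕ) (hk1 : 1 ≤ k) (hk2 : k ≤ p - 1)
    (hp : 1 ≤ p) :
    mu p φ (X p 2) (X p (2*k+2)) = (1 + φ k) • X p (2*k+2) := by
  simp only [mu, LinearMap.add_apply, LinearMap.sum_apply, elem_apply]
  rw [Finset.sum_eq_single_of_mem k (by simp only [Finset.mem_Icc]; omega),
    coordL_X_ne p 2 1 (by omega) (by omega) (by omega),
    coordL_X_ne p (2*k+2) 1 (by omega) (by omega) (by omega),
    coordL_X_ne p (2*k+2) 2 (by omega) (by omega) (by omega),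
    coordL_X_eq p 2 (by omega) (by omega),
    coordL_X_ne p 2 (2*k+1) (by omega) (by omega) (by omega),
    coordL_X_ne p 2 (2*k+2) (by omega) (by omega) (by omega),
    coordL_X_eq p (2*k+2) (by omega) (by omega),
    coordL_X_ne p (2*k+2) (2*k+1) (by omega) (by omega) (by omega)]
  · simp
  · intro m hm hmk
    simp only [Finset.mem_Icc] at hm
    rw [coordL_X_ne p 2 (2*m+1) (by omega) (by omega) (by omega),
      coordL_X_ne p 2 (2*m+2) (by omega) (by omega) (by omega),
      coordL_X_eq p 2 (by omega) (by omega),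
      coordL_X_ne p (2*k+2) (2*m+1) (by omega) (by omega) (by omega),
      coordL_X_ne p (2*k+2) (2*m+2) (by omega) (by omega) (by omega),
      coordL_X_ne p (2*k+2) 2 (by omega) (by omega) (by omega)]
    simp

lemma gr_zero (p : ℕ) : gr p 0 = Submodule.span ℂ {X p 2} := by simp [gr]

lemma gr_one (p : ℕ) :
    gr p 1 = Submodule.span ℂ {v | ∃ j, 3 ≤ j ∧ j ≤ 2*p ∧ v = X p j} := by simp [gr]

lemma gr_two (p : ℕ) : gr p 2 = Submodule.span ℂ {X p 1} := by simp [gr]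

lemma gr_eq_bot (p : ℕ) (n : ℤ) (h0 : n ≠ 0) (h1 : n ≠ 1) (h2 : n ≠ 2) :
    gr p n = ⊥ := by simp [gr, h0, h1, h2]

lemma X1_mem_gr (p : ℕ) : X p 1 ∈ gr p 2 := by
  rw [gr_two]; exact Submodule.mem_span_singleton_self _

lemma X2_mem_gr (p : ℕ) : X p 2 ∈ gr p 0 := by
  rw [gr_zero]; exact Submodule.mem_span_singleton_self _

lemma Xj_mem_gr (p j : ℕ) (hj : 3 ≤ j) (hj2 : j ≤ 2*p) : X p j ∈ gr p 1 := by
  rw [gr_one]; exact Submodule.subset_span ⟨j, hj, hj2, rfl⟩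

lemma X2_ne_zero (p : ℕ) (hp : 1 ≤ p) : X p 2 ≠ 0 := by
  intro h
  have := congrFun h ⟨1, by omega⟩
  simp [X] at this

lemma zero_of_bot {p : ℕ} {k : ℤ} {ψ : V p → V p → V p} (hdeg : ψ ∈ degF p k)
    {a b : ℤ} {x y : V p} (hx : x ∈ gr p a) (hy : y ∈ gr p b)
    (h0 : a+b+k ≠ 0) (h1 : a+b+k ≠ 1) (h2 : a+b+k ≠ 2) : ψ x y = 0 := by
  have h := hdeg a b x hx y hy
  rw [gr_eq_bot p _ h0 h1 h2] at h
  exact (Submodule.mem_bot ℂ).mp h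

lemma psi_zero_left {p : ℕ} {ψ : V p → V p → V p} (hb : IsBil p ψ) (y : V p) :
    ψ 0 y = 0 := by
  have := hb.2.1 0 0 y
  simpa using this

lemma psi_zero_right {p : ℕ} {ψ : V p → V p → V p} (hb : IsBil p ψ) (x : V p) :
    ψ x 0 = 0 := by
  have := hb.2.2.2 0 x 0
  simpa using this

lemma psi_comm {p : ℕ} {ψ : V p → V p → V p} (hb : IsBil p ψ)
    (halt : ∀ x, ψ x x = 0) (x y : V p) : ψ y x = -ψ x y := by
  have h := halt (x + y)
  rw [hb.1, hb.2.2.1, hb.2.2.1, halt x, halt y] at h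
  simp only [zero_add, add_zero] at h
  exact eq_neg_of_add_eq_zero_right h

lemma basis_expand (p : ℕ) (x : V p) :
    x = ∑ i : Fin (2*p), x i • X p ((i:ℕ)+1) := by
  funext l
  rw [Finset.sum_apply, Finset.sum_eq_single l]
  · simp [X]
  · intro i _ hne
    simp only [Pi.smul_apply, X, smul_eq_mul]
    rw [if_neg, mul_zero]
    intro h
    exact hne (Fin.ext (by omega))
  · intro h
    exact absurd (Finset.mem_univ l) h

lemma psum_left {p : ℕ} {ψ : V p → V p → V p} (hb : IsBil p ψ)
    {ι : Type*} (s : Finset ι) (f : ι → V p) (y : V p) :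
    ψ (∑ i ∈ s, f i) y = ∑ i ∈ s, ψ (f i) y := by
  induction s using Finset.cons_induction with
  | empty => simpa using psi_zero_left hb y
  | cons a s ha ih => rw [Finset.sum_cons, hb.1, ih, Finset.sum_cons]

lemma psum_right {p : ℕ} {ψ : V p → V p → V p} (hb : IsBil p ψ)
    {ι : Type*} (s : Finset ι) (f : ι → V p) (x : V p) :
    ψ x (∑ i ∈ s, f i) = ∑ i ∈ s, ψ x (f i) := by
  induction s using Finset.cons_induction with
  | empty => simpa using psi_zero_right hb x
  | cons a s ha ih => rw [Finset.sum_cons, hb.2.2.1, ih, Finset.sum_cons]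

lemma eq_zero_of_basis {p : ℕ} (ψ : V p → V p → V p) (hb : IsBil p ψ)
    (h : ∀ i j : Fin (2*p), ψ (X p ((i:ℕ)+1)) (X p ((j:ℕ)+1)) = 0) :
    ψ = 0 := by
  have hy0 : ∀ (i : Fin (2*p)) (y : V p), ψ (X p ((i:ℕ)+1)) y = 0 := by
    intro i y
    conv_lhs => rw [basis_expand p y]
    rw [psum_right hb]
    refine Finset.sum_eq_zero fun j _ => ?_
    rw [hb.2.2.2, h i j, smul_zero]
  funext x y
  show ψ x y = 0
  conv_lhs => rw [basis_expand p x]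
  rw [psum_left hb]
  refine Finset.sum_eq_zero fun i _ => ?_
  rw [hb.2.1, hy0 i y, smul_zero]

lemma key_m3 {p : ℕ} (hp : 2 ≤ p) {φ : ℕ → ℂ} (hΩ : AvoidsOmega p φ)
    {ψ : V p → V p → V p} (hb : IsBil p ψ) (halt : ∀ x, ψ x x = 0)
    (hcoc : ∀ x y z, mu p φ x (ψ y z) - mu p φ y (ψ x z) + mu p φ z (ψ x y)
      - ψ (mu p φ x y) z + ψ (mu p φ x z) y - ψ (mu p φ y z) x = 0)
    {j : ℕ} (hj : 3 ≤ j) (hj2 : j ≤ 2*p)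
    (h1 : ψ (X p 1) (X p j) ∈ gr p 0)
    (h2 : ψ (X p 2) (X p j) = 0)
    (h3 : ψ (X p 2) (X p 1) = 0) :
    ψ (X p 1) (X p j) = 0 := by
  rw [gr_zero] at h1
  obtain ⟨c, hc⟩ := Submodule.mem_span_singleton.mp h1
  obtain ⟨m, hm, hm1, hm2⟩ : ∃ m, (j = 2*m+1 ∨ j = 2*m+2) ∧ 1 ≤ m ∧ m ≤ p-1 :=
    ⟨(j-1)/2, by omega, by omega, by omega⟩
  obtain ⟨lam, hlam, hlamne⟩ :
      ∃ lam : ℂ, mu p φ (X p 2) (X p j) = lam • X p j ∧ 1 + lam ≠ 0 := by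
    rcases hm with hm | hm
    · refine ⟨-(φ m), by rw [hm]; exact mu_X2_Xodd p φ m hm1 hm2 (by omega), ?_⟩
      have := (hΩ.2 m m hm1 hm2 hm1 hm2).2.2.2.1
      intro hcon; apply this; linear_combination hcon
    · refine ⟨1 + φ m, by rw [hm]; exact mu_X2_Xeven p φ m hm1 hm2 (by omega), ?_⟩
      have := (hΩ.2 m m hm1 hm2 hm1 hm2).2.2.1
      intro hcon; apply this; linear_combination hcon
  have E := hcoc (X p 2) (X p 1) (X p j)
  rw [h2, h3, mu_X2_X1 p (by omega) φ, mu_X1_Xj p (by omega) φ j hj, hlam, ← hc] at E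
  rw [map_smul, mu_self, map_zero, map_zero, psi_zero_left hb,
    hb.2.1, psi_comm hb halt (X p 1) (X p j), ← hc] at E
  have hE : ((-(1+lam)) * c) • X p 2 = 0 := by
    linear_combination (norm := module) E
  rcases smul_eq_zero.mp hE with h | h
  · rcases mul_eq_zero.mp h with h | h
    · exact absurd (neg_eq_zero.mp h) hlamne
    · rw [← hc, h, zero_smul]
  · exact absurd h (X2_ne_zero p (by omega))

end Stmt10Aux

/-- if `φ` avoids `Ω` then for every `k ≤ −3` or `k ≥ 2` the space
`Z²_k` of 2-cocycles of degree `k` vanishes. -/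
theorem stmt10 (p : ℕ) (hp : 2 ≤ p) (φ : ℕ → ℂ) (hΩ : AvoidsOmega p φ) :
    ∀ k : ℤ, (k ≤ -3 ∨ 2 ≤ k) → Z2F p φ ⊓ degF p k = ⊥ := by
  intro k hk
  rw [eq_bot_iff]
  intro ψ hψ
  rw [Submodule.mem_inf] at hψ
  obtain ⟨⟨hb, halt, hcoc⟩, hdeg⟩ := hψ
  rw [Submodule.mem_bot]
  apply Stmt10Aux.eq_zero_of_basis ψ hb
  intro i j
  have hi2 := i.isLt
  have hj2 := j.isLt
  have hi : (i:ℕ)+1 = 1 ∨ (i:ℕ)+1 = 2 ∨ (3 ≤ (i:ℕ)+1 ∧ (i:ℕ)+1 ≤ 2*p) := by omega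
  have hj : (j:ℕ)+1 = 1 ∨ (j:ℕ)+1 = 2 ∨ (3 ≤ (j:ℕ)+1 ∧ (j:ℕ)+1 ≤ 2*p) := by omega
  have e0 : (2:ℤ)+1+(-3) = 0 := by norm_num
  rcases hi with hi | hi | hi <;> rcases hj with hj | hj | hj
  · rw [hi, hj]; exact halt _
  · rw [hi, hj]
    exact Stmt10Aux.zero_of_bot hdeg (Stmt10Aux.X1_mem_gr p) (Stmt10Aux.X2_mem_gr p)
      (by omega) (by omega) (by omega)
  · rw [hi]
    by_cases hk3 : k = -3
    · subst hk3
      have h1 := hdeg 2 1 (X p 1) (Stmt10Aux.X1_mem_gr p) (X p ((j:ℕ)+1))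
        (Stmt10Aux.Xj_mem_gr p _ hj.1 hj.2)
      rw [e0] at h1
      exact Stmt10Aux.key_m3 hp hΩ hb halt hcoc hj.1 hj.2 h1
        (Stmt10Aux.zero_of_bot hdeg (Stmt10Aux.X2_mem_gr p)
          (Stmt10Aux.Xj_mem_gr p _ hj.1 hj.2) (by omega) (by omega) (by omega))
        (Stmt10Aux.zero_of_bot hdeg (Stmt10Aux.X2_mem_gr p) (Stmt10Aux.X1_mem_gr p)
          (by omega) (by omega) (by omega))
    · exact Stmt10Aux.zero_of_bot hdeg (Stmt10Aux.X1_mem_gr p)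
        (Stmt10Aux.Xj_mem_gr p _ hj.1 hj.2) (by omega) (by omega) (by omega)
  · rw [hi, hj]
    exact Stmt10Aux.zero_of_bot hdeg (Stmt10Aux.X2_mem_gr p) (Stmt10Aux.X1_mem_gr p)
      (by omega) (by omega) (by omega)
  · rw [hi, hj]; exact halt _
  · rw [hi]
    exact Stmt10Aux.zero_of_bot hdeg (Stmt10Aux.X2_mem_gr p)
      (Stmt10Aux.Xj_mem_gr p _ hj.1 hj.2) (by omega) (by omega) (by omega)
  · rw [hj]
    by_cases hk3 : k = -3
    · subst hk3
      rw [Stmt10Aux.psi_comm hb halt (X p 1) (X p ((i:ℕ)+1)), neg_eq_zero]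
      have h1 := hdeg 2 1 (X p 1) (Stmt10Aux.X1_mem_gr p) (X p ((i:ℕ)+1))
        (Stmt10Aux.Xj_mem_gr p _ hi.1 hi.2)
      rw [e0] at h1
      exact Stmt10Aux.key_m3 hp hΩ hb halt hcoc hi.1 hi.2 h1
        (Stmt10Aux.zero_of_bot hdeg (Stmt10Aux.X2_mem_gr p)
          (Stmt10Aux.Xj_mem_gr p _ hi.1 hi.2) (by omega) (by omega) (by omega))
        (Stmt10Aux.zero_of_bot hdeg (Stmt10Aux.X2_mem_gr p) (Stmt10Aux.X1_mem_gr p)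
          (by omega) (by omega) (by omega))
    · exact Stmt10Aux.zero_of_bot hdeg (Stmt10Aux.Xj_mem_gr p _ hi.1 hi.2)
        (Stmt10Aux.X1_mem_gr p) (by omega) (by omega) (by omega)
  · rw [hj]
    exact Stmt10Aux.zero_of_bot hdeg (Stmt10Aux.Xj_mem_gr p _ hi.1 hi.2)
      (Stmt10Aux.X2_mem_gr p) (by omega) (by omega) (by omega)
  · exact Stmt10Aux.zero_of_bot hdeg (Stmt10Aux.Xj_mem_gr p _ hi.1 hi.2)
      (Stmt10Aux.Xj_mem_gr p _ hj.1 hj.2) (by omega) (by omega) (by omega)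
end
end
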